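/- arXiv:2504.20573 — 2 statements merged into one kernel-verified Lean document; each statement's English description precedes it below -/
import Mathlib

section
/- Extension lemma for 2-trees: Let G be a 2-tree with a branch B = B({v₁,v₂},u₀) that is an ear, a hat, or a double hat of G, and let G' = G − (V(B)∖{v₁,v₂}). If G' admits an odd 4-coloring φ', then φ' extends to a proper 4-coloring of G in which every vertex other than v₁ has a color appearing an odd number of times among its neighbors. -/
open SimpleGraph Finset
open scoped Classical

section Defs

variable {V : Type*}

/-- Degree of a vertex (classical, no decidability assumptions). -/
noncomputable def gdeg [Fintype V] (G : SimpleGraph V) (v : V) : ℕ :=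
  (Finset.univ.filter fun u => G.Adj v u).card

/-- Number of neighbors of `v` receiving color `c` under `φ`. -/
noncomputable def colorCount [Fintype V] (G : SimpleGraph V) {α : Type*} (φ : V → α)
    (v : V) (c : α) : ℕ :=
  (Finset.univ.filter fun u => G.Adj v u ∧ φ u = c).card

/-- `φ` is a proper coloring of `G`. -/
def ProperColoring (G : SimpleGraph V) {α : Type*} (φ : V → α) : Prop :=
  ∀ u w, G.Adj u w → φ u ≠ φ w

/-- Vertex `v` satisfies the odd condition w.r.t. `φ`. -/
def OddAt [Fintype V] (G : SimpleGraph V) {α : Type*} (φ : V → α) (v : V) : Prop :=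
  ∃ c, Odd (colorCount G φ v c)

/-- `φ` is an odd `m`-coloring of `G`. -/
def IsOddColoring [Fintype V] (G : SimpleGraph V) (m : ℕ) (φ : V → Fin m) : Prop :=
  ProperColoring G φ ∧ ∀ v : V, (∃ u, G.Adj v u) → OddAt G φ v

/-- `G` is odd `m`-colorable. -/
def OddColorable [Fintype V] (G : SimpleGraph V) (m : ℕ) : Prop :=
  ∃ φ : V → Fin m, IsOddColoring G m φ

/-- The identity ordering of `Fin n` is an addition ordering of `G` as a `k`-tree:
the first `k+1` vertices form a clique and every later vertex's earlier neighborhood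
is a clique of order `k`. -/
def IsAdditionOrdering {n : ℕ} (k : ℕ) (G : SimpleGraph (Fin n)) : Prop :=
  (∀ i j : Fin n, i.val < k + 1 → j.val < k + 1 → i ≠ j → G.Adj i j) ∧
  ∀ i : Fin n, k + 1 ≤ i.val →
    G.IsNClique k (Finset.univ.filter fun j => j < i ∧ G.Adj i j)

/-- `G` is a `k`-tree. -/
def IsKTree (k : ℕ) [Fintype V] (G : SimpleGraph V) : Prop :=
  k + 1 ≤ Fintype.card V ∧
  ∃ e : V ≃ Fin (Fintype.card V),
    IsAdditionOrdering k (SimpleGraph.comap (fun j => e.symm j) G)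

/-- The graph obtained from `G` by deleting the vertices in `S`
(the vertices of `S` are kept but become isolated). -/
def GraphDel (G : SimpleGraph V) (S : Set V) : SimpleGraph V where
  Adj x y := G.Adj x y ∧ x ∉ S ∧ y ∉ S
  symm := ⟨fun x y h => ⟨h.1.symm, h.2.2, h.2.1⟩⟩
  loopless := ⟨fun x h => G.loopless.irrefl x h.1⟩

end Defs
section Defs
variable {V : Type*}

/-- An ear of a 2-tree over the edge `{v₁,v₂}`. -/
def IsEar2 (G : SimpleGraph V) (v₁ v₂ u₀ : V) : Prop :=
  G.Adj v₁ v₂ ∧ G.neighborSet u₀ = {v₁, v₂}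

/-- A hat of a 2-tree over the edge `{v₁,v₂}`. -/
def IsHat2 (G : SimpleGraph V) (v₁ v₂ u₀ u₁ u₂ : V) : Prop :=
  G.Adj v₁ v₂ ∧ G.neighborSet u₀ = {v₁, v₂, u₁, u₂} ∧
  G.neighborSet u₁ = {v₁, u₀} ∧ G.neighborSet u₂ = {v₂, u₀}

/-- A double hat of a 2-tree over the edge `{v₁,v₂}`. -/
def IsDoubleHat2 (G : SimpleGraph V) (v₁ v₂ u₀ u₁ u₂ u₃ u₄ u₅ u₆ : V) : Prop :=
  G.Adj v₁ v₂ ∧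
  G.neighborSet u₀ = {v₁, v₂, u₁, u₂, u₄, u₅} ∧
  G.neighborSet u₁ = {v₁, u₀, u₃, u₄} ∧
  G.neighborSet u₂ = {v₂, u₀, u₅, u₆} ∧
  G.neighborSet u₃ = {v₁, u₁} ∧ G.neighborSet u₄ = {u₀, u₁} ∧
  G.neighborSet u₅ = {u₀, u₂} ∧ G.neighborSet u₆ = {v₂, u₂}

/-- The branch over the edge `{a,b}` with apex `u` is an ear, a hat, or a double hat. -/
def SpecialBranch2 (G : SimpleGraph V) (a b u : V) : Prop :=
  IsEar2 G a b u ∨ (∃ x y, IsHat2 G a b u x y) ∨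
  ∃ x₁ x₂ x₃ x₄ x₅ x₆, IsDoubleHat2 G a b u x₁ x₂ x₃ x₄ x₅ x₆

/-- `|N(u₀) ∩ N(a)| ≤ 1`. -/
def Side2Small (G : SimpleGraph V) (a u₀ : V) : Prop :=
  (G.neighborSet u₀ ∩ G.neighborSet a).Subsingleton

/-- `N(u₀) ∩ N(a) = {b, u}` with `B({a,u₀},u)` an ear, hat or double hat. -/
def Side2Branch (G : SimpleGraph V) (a b u₀ : V) : Prop :=
  ∃ u, b ≠ u ∧ G.neighborSet u₀ ∩ G.neighborSet a = {b, u} ∧ SpecialBranch2 G a u₀ u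

/-- Membership of the branch `B({v₁,v₂},u₀)` in `𝓗⁽²⁾(G)`. -/
def InH2 (G : SimpleGraph V) (v₁ v₂ u₀ : V) : Prop :=
  G.Adj v₁ v₂ ∧ G.Adj v₁ u₀ ∧ G.Adj v₂ u₀ ∧
  (Side2Small G v₁ u₀ ∨ Side2Branch G v₁ v₂ u₀) ∧
  (Side2Small G v₂ u₀ ∨ Side2Branch G v₂ v₁ u₀) ∧
  (Side2Branch G v₁ v₂ u₀ ∨ Side2Branch G v₂ v₁ u₀)

/-- Membership of a pair of special branches over the edge `{v₁,v₂}` in `𝓣⁽²⁾(G)`. -/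
def InT2 (G : SimpleGraph V) (v₁ v₂ : V) : Prop :=
  ∃ u₀ w₀, u₀ ≠ w₀ ∧ SpecialBranch2 G v₁ v₂ u₀ ∧ SpecialBranch2 G v₁ v₂ w₀

/-- An ear of a 3-tree over the triangle `{v₁,v₂,v₃}`. -/
def IsEar3 (G : SimpleGraph V) (v₁ v₂ v₃ u₀ : V) : Prop :=
  G.Adj v₁ v₂ ∧ G.Adj v₂ v₃ ∧ G.Adj v₁ v₃ ∧ G.neighborSet u₀ = {v₁, v₂, v₃}

/-- A one-hat of a 3-tree over the triangle `{v₁,v₂,v₃}`. -/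
def IsOneHat3 (G : SimpleGraph V) (v₁ v₂ v₃ u₀ u₁ : V) : Prop :=
  G.Adj v₁ v₂ ∧ G.Adj v₂ v₃ ∧ G.Adj v₁ v₃ ∧
  G.neighborSet u₀ = {v₁, v₂, v₃, u₁} ∧ G.neighborSet u₁ = {v₁, v₂, u₀}

/-- A one-hat plus of a 3-tree over the triangle `{v₁,v₂,v₃}`. -/
def IsOneHatPlus3 (G : SimpleGraph V) (v₁ v₂ v₃ u₀ u₁ u₂ u₃ : V) : Prop :=
  G.Adj v₁ v₂ ∧ G.Adj v₂ v₃ ∧ G.Adj v₁ v₃ ∧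
  G.neighborSet u₀ = {v₁, v₂, v₃, u₁, u₂, u₃} ∧
  G.neighborSet u₁ = {v₁, v₂, u₀, u₃} ∧
  G.neighborSet u₂ = {v₂, v₃, u₀} ∧
  G.neighborSet u₃ = {v₁, u₀, u₁}

/-- The branch over the (unordered) triangle `{a,b,c}` with apex `u` is a one-hat. -/
def IsOneHatBranch3 (G : SimpleGraph V) (a b c u : V) : Prop :=
  ∃ x, IsOneHat3 G a b c u x ∨ IsOneHat3 G b c a u x ∨ IsOneHat3 G c a b u x

/-- The branch over the (unordered) triangle `{a,b,c}` with apex `u` is a one-hat plus. -/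
def IsOneHatPlusBranch3 (G : SimpleGraph V) (a b c u : V) : Prop :=
  ∃ x₁ x₂ x₃,
    IsOneHatPlus3 G a b c u x₁ x₂ x₃ ∨ IsOneHatPlus3 G b c a u x₁ x₂ x₃ ∨
    IsOneHatPlus3 G c a b u x₁ x₂ x₃ ∨ IsOneHatPlus3 G a c b u x₁ x₂ x₃ ∨
    IsOneHatPlus3 G b a c u x₁ x₂ x₃ ∨ IsOneHatPlus3 G c b a u x₁ x₂ x₃

/-- The branch over the triangle `{a,b,c}` with apex `u` is an ear, one-hat or one-hat plus. -/
def SpecialBranch3 (G : SimpleGraph V) (a b c u : V) : Prop :=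
  IsEar3 G a b c u ∨ IsOneHatBranch3 G a b c u ∨ IsOneHatPlusBranch3 G a b c u

/-- `|N(u₀) ∩ N(a) ∩ N(b)| ≤ 1`. -/
def Side3Small (G : SimpleGraph V) (a b u₀ : V) : Prop :=
  (G.neighborSet u₀ ∩ G.neighborSet a ∩ G.neighborSet b).Subsingleton

/-- `N(u₀) ∩ N(a) ∩ N(b) = {c, u}` with `B({a,b,u₀},u)` an ear, one-hat or one-hat plus. -/
def Side3Branch (G : SimpleGraph V) (a b c u₀ : V) : Prop :=
  ∃ u, c ≠ u ∧ G.neighborSet u₀ ∩ G.neighborSet a ∩ G.neighborSet b = {c, u} ∧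
    SpecialBranch3 G a b u₀ u

/-- Membership of the branch `B({v₁,v₂,v₃},u₀)` in `𝓗⁽³⁾(G)`. -/
def InH3 (G : SimpleGraph V) (v₁ v₂ v₃ u₀ : V) : Prop :=
  G.Adj v₁ v₂ ∧ G.Adj v₂ v₃ ∧ G.Adj v₁ v₃ ∧
  G.Adj v₁ u₀ ∧ G.Adj v₂ u₀ ∧ G.Adj v₃ u₀ ∧
  (Side3Small G v₁ v₂ u₀ ∨ Side3Branch G v₁ v₂ v₃ u₀) ∧
  (Side3Small G v₂ v₃ u₀ ∨ Side3Branch G v₂ v₃ v₁ u₀) ∧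
  (Side3Small G v₃ v₁ u₀ ∨ Side3Branch G v₃ v₁ v₂ u₀) ∧
  (Side3Branch G v₁ v₂ v₃ u₀ ∨ Side3Branch G v₂ v₃ v₁ u₀ ∨ Side3Branch G v₃ v₁ v₂ u₀)

/-- Membership of a pair of special branches over the triangle `{v₁,v₂,v₃}` in `𝓣⁽³⁾(G)`. -/
def InT3 (G : SimpleGraph V) (v₁ v₂ v₃ : V) : Prop :=
  ∃ u₀ w₀, u₀ ≠ w₀ ∧ SpecialBranch3 G v₁ v₂ v₃ u₀ ∧ SpecialBranch3 G v₁ v₂ v₃ w₀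
end Defs

section Aux
variable {V : Type*} [Fintype V] [DecidableEq V]

lemma pick3 : ∀ (a b c : Fin 4), ∃ d : Fin 4, d ≠ a ∧ d ≠ b ∧ d ≠ c := by decide

lemma pickAB : ∀ (p₁ p₂ c : Fin 4), p₁ ≠ p₂ →
    ∃ a b : Fin 4, a ≠ p₁ ∧ a ≠ p₂ ∧ b ≠ p₁ ∧ b ≠ p₂ ∧ a ≠ b ∧ b ≠ c := by decide

lemma colorCount_eq_card (G : SimpleGraph V) (φ : V → Fin 4) (v : V) (c : Fin 4)
    (t : Finset V) (h : ∀ u, (G.Adj v u ∧ φ u = c) ↔ u ∈ t) :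
    colorCount G φ v c = t.card := by
  unfold colorCount
  congr 1
  ext u
  simp only [Finset.mem_filter, Finset.mem_univ, true_and]
  exact h u

lemma colorCount_congr (G G' : SimpleGraph V) (φ φ' : V → Fin 4) (v : V) (c : Fin 4)
    (h : ∀ u, (G.Adj v u ∧ φ u = c) ↔ (G'.Adj v u ∧ φ' u = c)) :
    colorCount G φ v c = colorCount G' φ' v c := by
  unfold colorCount
  congr 1
  ext u
  simp only [Finset.mem_filter, Finset.mem_univ, true_and]
  exact h u

lemma outside_odd (G : SimpleGraph V) (S : Finset V) (φ φ' : V → Fin 4)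
    (hagree : ∀ y ∉ S, φ y = φ' y)
    (hφ' : IsOddColoring (GraphDel G ↑S) 4 φ')
    (x : V) (hx : x ∉ S) (hnb : ∀ s, G.Adj x s → s ∉ S)
    (hne : ∃ u, G.Adj x u) : OddAt G φ x := by
  obtain ⟨u, hu⟩ := hne
  have hu' : (GraphDel G ↑S).Adj x u := ⟨hu, by simpa using hx, by simpa using hnb u hu⟩
  obtain ⟨c, hc⟩ := hφ'.2 x ⟨u, hu'⟩
  refine ⟨c, ?_⟩
  have heq : colorCount G φ x c = colorCount (GraphDel G ↑S) φ' x c := by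
    refine colorCount_congr _ _ _ _ _ _ (fun w => ?_)
    constructor
    · rintro ⟨ha, hcol⟩
      exact ⟨⟨ha, by simpa using hx, by simpa using hnb w ha⟩,
        by rw [← hagree w (hnb w ha)]; exact hcol⟩
    · rintro ⟨ha, hcol⟩
      have hwS : w ∉ S := by simpa using ha.2.2
      exact ⟨ha.1, by rw [hagree w hwS]; exact hcol⟩
  rw [heq]; exact hc

end Aux
section Cases
variable {V : Type*} [Fintype V] [DecidableEq V]

lemma ear_case (G : SimpleGraph V) (v₁ v₂ u₀ : V)
    (h : IsEar2 G v₁ v₂ u₀) (φ' : V → Fin 4)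
    (hφ' : IsOddColoring (GraphDel G ↑({u₀} : Finset V)) 4 φ') :
    ∃ φ : V → Fin 4, (∀ x ∉ ({u₀} : Finset V), φ x = φ' x) ∧ ProperColoring G φ ∧
      ∀ x : V, x ≠ v₁ → (∃ u, G.Adj x u) → OddAt G φ x := by
  obtain ⟨h12, hN0⟩ := h
  have A0 : ∀ w, G.Adj u₀ w ↔ (w = v₁ ∨ w = v₂) := by
    intro w
    rw [← SimpleGraph.mem_neighborSet, hN0]
    simp
  have a01 : G.Adj u₀ v₁ := (A0 v₁).mpr (Or.inl rfl)
  have a02 : G.Adj u₀ v₂ := (A0 v₂).mpr (Or.inr rfl)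
  have hd1 : (GraphDel G ↑({u₀} : Finset V)).Adj v₁ v₂ :=
    ⟨h12, by simpa using a01.ne', by simpa using a02.ne'⟩
  have hp : φ' v₁ ≠ φ' v₂ := hφ'.1 v₁ v₂ hd1
  obtain ⟨c, hc⟩ := hφ'.2 v₂ ⟨v₁, hd1.symm⟩
  obtain ⟨a, ha1, ha2, hac⟩ := pick3 (φ' v₁) (φ' v₂) c
  classical
  set φ : V → Fin 4 := fun x => if x = u₀ then a else φ' x with hφdef
  have hφ0 : φ u₀ = a := by simp [hφdef]
  have hagree : ∀ x ∉ ({u₀} : Finset V), φ x = φ' x := by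
    intro x hx
    simp only [Finset.mem_singleton] at hx
    simp [hφdef, hx]
  have hφ1 : φ v₁ = φ' v₁ := hagree v₁ (by simpa using a01.ne')
  have hφ2 : φ v₂ = φ' v₂ := hagree v₂ (by simpa using a02.ne')
  refine ⟨φ, hagree, ?_, ?_⟩
  · -- proper
    intro u w hadj
    by_cases hu : u = u₀
    · subst hu
      rcases (A0 w).mp hadj with rfl | rfl
      · rw [hφ0, hφ1]; exact ha1
      · rw [hφ0, hφ2]; exact ha2
    · by_cases hw : w = u₀
      · subst hw
        rcases (A0 u).mp hadj.symm with rfl | rfl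
        · rw [hφ0, hφ1]; exact ha1.symm
        · rw [hφ0, hφ2]; exact ha2.symm
      · have hd : (GraphDel G ↑({u₀} : Finset V)).Adj u w :=
          ⟨hadj, by simpa using hu, by simpa using hw⟩
        rw [hagree u (by simpa using hu), hagree w (by simpa using hw)]
        exact hφ'.1 u w hd
  · -- odd
    intro x hxv hne
    by_cases hxu : x = u₀
    · rw [hxu]
      refine ⟨φ' v₁, ?_⟩
      rw [colorCount_eq_card G φ u₀ (φ' v₁) {v₁} ?_]
      · simp
      · intro w
        simp only [Finset.mem_singleton]
        constructor
        · rintro ⟨hadj, hcol⟩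
          rcases (A0 w).mp hadj with rfl | rfl
          · rfl
          · rw [hφ2] at hcol; exact absurd hcol.symm hp
        · rintro rfl
          exact ⟨a01, hφ1⟩
    · by_cases hxv2 : x = v₂
      · rw [hxv2] at hxu ⊢
        refine ⟨c, ?_⟩
        rw [colorCount_congr G (GraphDel G ↑({u₀} : Finset V)) φ φ' v₂ c ?_]
        · exact hc
        · intro w
          constructor
          · rintro ⟨hadj, hcol⟩
            by_cases hw : w = u₀
            · subst hw; rw [hφ0] at hcol; exact absurd hcol hac
            · exact ⟨⟨hadj, by simpa using hxu, by simpa using hw⟩,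
                by rw [← hagree w (by simpa using hw)]; exact hcol⟩
          · rintro ⟨hadj, hcol⟩
            have hw : w ∉ ({u₀} : Finset V) := by simpa using hadj.2.2
            exact ⟨hadj.1, by rw [hagree w hw]; exact hcol⟩
      · refine outside_odd G _ φ φ' hagree hφ' x (by simpa using hxu) ?_ hne
        intro s hs
        simp only [Finset.mem_singleton]
        rintro rfl
        rcases (A0 x).mp hs.symm with rfl | rfl
        · exact hxv rfl
        · exact hxv2 rfl

lemma tri_case (G : SimpleGraph V) (v₁ v₂ u₀ : V) (S : Finset V)
    (hSm : ∀ x, x ∈ S ↔ (x = u₀ ∨ x = v₁ ∨ x = v₂))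
    (Au₀ : ∀ w, G.Adj u₀ w ↔ (w = v₁ ∨ w = v₂))
    (Av₁ : ∀ w, G.Adj v₁ w ↔ (w = v₂ ∨ w = u₀))
    (Av₂ : ∀ w, G.Adj v₂ w ↔ (w = v₁ ∨ w = u₀))
    (φ' : V → Fin 4) (hφ' : IsOddColoring (GraphDel G ↑S) 4 φ') :
    ∃ φ : V → Fin 4, (∀ x ∉ S, φ x = φ' x) ∧ ProperColoring G φ ∧
      ∀ x : V, x ≠ v₁ → (∃ u, G.Adj x u) → OddAt G φ x := by
  have a01 : G.Adj u₀ v₁ := (Au₀ v₁).mpr (Or.inl rfl)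
  have a02 : G.Adj u₀ v₂ := (Au₀ v₂).mpr (Or.inr rfl)
  have h12 : G.Adj v₁ v₂ := (Av₁ v₂).mpr (Or.inl rfl)
  classical
  set φ : V → Fin 4 := fun x => if x = v₁ then 0 else if x = v₂ then 1 else
    if x = u₀ then 2 else φ' x with hφdef
  have hφ1 : φ v₁ = 0 := by simp [hφdef]
  have hφ2 : φ v₂ = 1 := by simp [hφdef, h12.ne']
  have hφ0 : φ u₀ = 2 := by simp [hφdef, a01.ne, a02.ne]
  have hagree : ∀ x ∉ S, φ x = φ' x := by
    intro x hx
    rw [hSm] at hx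
    push_neg at hx
    simp [hφdef, hx.1, hx.2.1, hx.2.2]
  refine ⟨φ, hagree, ?_, ?_⟩
  · intro u w hadj
    by_cases hu1 : u = v₁
    · subst hu1
      rcases (Av₁ w).mp hadj with rfl | rfl
      · rw [hφ1, hφ2]; decide
      · rw [hφ1, hφ0]; decide
    · by_cases hu2 : u = v₂
      · subst hu2
        rcases (Av₂ w).mp hadj with rfl | rfl
        · rw [hφ2, hφ1]; decide
        · rw [hφ2, hφ0]; decide
      · by_cases hu0 : u = u₀
        · subst hu0
          rcases (Au₀ w).mp hadj with rfl | rfl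
          · rw [hφ0, hφ1]; decide
          · rw [hφ0, hφ2]; decide
        · have huS : u ∉ S := by rw [hSm]; push_neg; exact ⟨hu0, hu1, hu2⟩
          have hwS : w ∉ S := by
            rw [hSm]; push_neg
            refine ⟨?_, ?_, ?_⟩ <;> rintro rfl
            · rcases (Au₀ u).mp hadj.symm with rfl | rfl
              · exact hu1 rfl
              · exact hu2 rfl
            · rcases (Av₁ u).mp hadj.symm with rfl | rfl
              · exact hu2 rfl
              · exact hu0 rfl
            · rcases (Av₂ u).mp hadj.symm with rfl | rfl
              · exact hu1 rfl
              · exact hu0 rfl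
          rw [hagree u huS, hagree w hwS]
          exact hφ'.1 u w ⟨hadj, by simpa using huS, by simpa using hwS⟩
  · intro x hxv hne
    by_cases hx0 : x = u₀
    · rw [hx0]
      refine ⟨0, ?_⟩
      rw [colorCount_eq_card G φ u₀ 0 {v₁} ?_]
      · simp
      · intro w
        simp only [Finset.mem_singleton]
        constructor
        · rintro ⟨hadj, hcol⟩
          rcases (Au₀ w).mp hadj with rfl | rfl
          · rfl
          · rw [hφ2] at hcol; exact absurd hcol (by decide)
        · rintro rfl; exact ⟨a01, hφ1⟩
    · by_cases hx2 : x = v₂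
      · rw [hx2]
        refine ⟨0, ?_⟩
        rw [colorCount_eq_card G φ v₂ 0 {v₁} ?_]
        · simp
        · intro w
          simp only [Finset.mem_singleton]
          constructor
          · rintro ⟨hadj, hcol⟩
            rcases (Av₂ w).mp hadj with rfl | rfl
            · rfl
            · rw [hφ0] at hcol; exact absurd hcol (by decide)
          · rintro rfl; exact ⟨h12.symm, hφ1⟩
      · refine outside_odd G _ φ φ' hagree hφ' x
          (by rw [hSm]; push_neg; exact ⟨hx0, hxv, hx2⟩) ?_ hne
        intro s hs hsS
        rw [hSm] at hsS
        rcases hsS with rfl | rfl | rfl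
        · rcases (Au₀ x).mp hs.symm with rfl | rfl
          · exact hxv rfl
          · exact hx2 rfl
        · rcases (Av₁ x).mp hs.symm with rfl | rfl
          · exact hx2 rfl
          · exact hx0 rfl
        · rcases (Av₂ x).mp hs.symm with rfl | rfl
          · exact hxv rfl
          · exact hx0 rfl

lemma hat_case (G : SimpleGraph V) (v₁ v₂ u₀ u₁ u₂ : V)
    (h : IsHat2 G v₁ v₂ u₀ u₁ u₂) (φ' : V → Fin 4)
    (hφ' : IsOddColoring (GraphDel G ↑({u₀, u₁, u₂} : Finset V)) 4 φ') :
    ∃ φ : V → Fin 4, (∀ x ∉ ({u₀, u₁, u₂} : Finset V), φ x = φ' x) ∧ ProperColoring G φ ∧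
      ∀ x : V, x ≠ v₁ → (∃ u, G.Adj x u) → OddAt G φ x := by
  obtain ⟨h12, hN0, hN1, hN2⟩ := h
  set S : Finset V := {u₀, u₁, u₂} with hSdef
  have hSm : ∀ x, x ∈ S ↔ (x = u₀ ∨ x = u₁ ∨ x = u₂) := by
    intro x; simp [hSdef]
  have A0 : ∀ w, G.Adj u₀ w ↔ (w = v₁ ∨ w = v₂ ∨ w = u₁ ∨ w = u₂) := by
    intro w; rw [← SimpleGraph.mem_neighborSet, hN0]; simp
  have A1 : ∀ w, G.Adj u₁ w ↔ (w = v₁ ∨ w = u₀) := by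
    intro w; rw [← SimpleGraph.mem_neighborSet, hN1]; simp
  have A2 : ∀ w, G.Adj u₂ w ↔ (w = v₂ ∨ w = u₀) := by
    intro w; rw [← SimpleGraph.mem_neighborSet, hN2]; simp
  have a01 : G.Adj u₀ v₁ := (A0 v₁).mpr (Or.inl rfl)
  have a02 : G.Adj u₀ v₂ := (A0 v₂).mpr (Or.inr (Or.inl rfl))
  have a0u1 : G.Adj u₀ u₁ := (A0 u₁).mpr (Or.inr (Or.inr (Or.inl rfl)))
  have a0u2 : G.Adj u₀ u₂ := (A0 u₂).mpr (Or.inr (Or.inr (Or.inr rfl)))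
  have a1v1 : G.Adj u₁ v₁ := (A1 v₁).mpr (Or.inl rfl)
  have a2v2 : G.Adj u₂ v₂ := (A2 v₂).mpr (Or.inl rfl)
  by_cases hdeg : v₁ = u₂
  · -- degenerate: v₁ = u₂, and then u₁ = v₂; the branch is a K₃ component
    have hu1v2 : u₁ = v₂ := by
      have : G.Adj u₂ u₁ := by rw [← hdeg]; exact a1v1.symm
      rcases (A2 u₁).mp this with h' | h'
      · exact h'
      · exact absurd h' a0u1.ne'
    refine tri_case G v₁ v₂ u₀ S ?_ ?_ ?_ ?_ φ' hφ'
    · intro x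
      rw [hSm]
      constructor
      · rintro (rfl | rfl | rfl)
        · exact Or.inl rfl
        · exact Or.inr (Or.inr hu1v2)
        · exact Or.inr (Or.inl hdeg.symm)
      · rintro (rfl | rfl | rfl)
        · exact Or.inl rfl
        · exact Or.inr (Or.inr hdeg)
        · exact Or.inr (Or.inl hu1v2.symm)
    · intro w
      rw [A0]
      constructor
      · rintro (rfl | rfl | rfl | rfl)
        · exact Or.inl rfl
        · exact Or.inr rfl
        · exact Or.inr hu1v2
        · exact Or.inl hdeg.symm
      · rintro (rfl | rfl)
        · exact Or.inl rfl
        · exact Or.inr (Or.inl rfl)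
    · intro w
      rw [hdeg, A2]
    · intro w
      rw [← hu1v2, A1]
  · -- nondegenerate: all five vertices distinct
    have hne21 : v₂ ≠ u₁ := by
      rintro rfl
      rcases (A1 u₂).mp a2v2.symm with h' | h'
      · exact hdeg h'.symm
      · exact a0u2.ne' h'
    have hne12 : u₁ ≠ u₂ := by
      rintro rfl
      rcases (A2 v₁).mp a1v1 with h' | h'
      · exact h12.ne h'
      · exact a01.ne' h'
    have hv1S : v₁ ∉ S := by
      rw [hSm]; push_neg
      exact ⟨a01.ne', a1v1.ne', hdeg⟩
    have hv2S : v₂ ∉ S := by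
      rw [hSm]; push_neg
      exact ⟨a02.ne', hne21, a2v2.ne'⟩
    have hd12 : (GraphDel G ↑S).Adj v₁ v₂ :=
      ⟨h12, by simpa using hv1S, by simpa using hv2S⟩
    have hp : φ' v₁ ≠ φ' v₂ := hφ'.1 v₁ v₂ hd12
    obtain ⟨c, hc⟩ := hφ'.2 v₂ ⟨v₁, hd12.symm⟩
    obtain ⟨a, ha1, ha2, hac⟩ := pick3 (φ' v₁) (φ' v₂) c
    obtain ⟨b, hb2, hba, hbc⟩ := pick3 (φ' v₂) a c
    obtain ⟨d, hd1, hd2, hda⟩ := pick3 (φ' v₁) (φ' v₂) a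
    classical
    set φ : V → Fin 4 := fun x => if x = u₀ then a else if x = u₁ then d else
      if x = u₂ then b else φ' x with hφdef
    have hφ0 : φ u₀ = a := by simp [hφdef]
    have hφu1 : φ u₁ = d := by simp [hφdef, a0u1.ne']
    have hφu2 : φ u₂ = b := by simp [hφdef, a0u2.ne', hne12.symm]
    have hagree : ∀ x ∉ S, φ x = φ' x := by
      intro x hx
      rw [hSm] at hx
      push_neg at hx
      simp [hφdef, hx.1, hx.2.1, hx.2.2]
    have hφ1 : φ v₁ = φ' v₁ := hagree v₁ hv1S
    have hφ2 : φ v₂ = φ' v₂ := hagree v₂ hv2S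
    refine ⟨φ, hagree, ?_, ?_⟩
    · intro u w hadj
      by_cases hu0 : u = u₀
      · subst hu0
        rcases (A0 w).mp hadj with rfl | rfl | rfl | rfl
        · rw [hφ0, hφ1]; exact ha1
        · rw [hφ0, hφ2]; exact ha2
        · rw [hφ0, hφu1]; exact hda.symm
        · rw [hφ0, hφu2]; exact hba.symm
      · by_cases hu1 : u = u₁
        · subst hu1
          rcases (A1 w).mp hadj with rfl | rfl
          · rw [hφu1, hφ1]; exact hd1
          · rw [hφu1, hφ0]; exact hda
        · by_cases hu2 : u = u₂
          · subst hu2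
            rcases (A2 w).mp hadj with rfl | rfl
            · rw [hφu2, hφ2]; exact hb2
            · rw [hφu2, hφ0]; exact hba
          · have huS : u ∉ S := by rw [hSm]; push_neg; exact ⟨hu0, hu1, hu2⟩
            by_cases hw0 : w = u₀
            · subst hw0
              rcases (A0 u).mp hadj.symm with rfl | rfl | rfl | rfl
              · rw [hφ0, hφ1]; exact ha1.symm
              · rw [hφ0, hφ2]; exact ha2.symm
              · exact absurd rfl hu1
              · exact absurd rfl hu2
            · by_cases hw1 : w = u₁
              · subst hw1
                rcases (A1 u).mp hadj.symm with rfl | rfl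
                · rw [hφu1, hφ1]; exact hd1.symm
                · exact absurd rfl hu0
              · by_cases hw2 : w = u₂
                · subst hw2
                  rcases (A2 u).mp hadj.symm with rfl | rfl
                  · rw [hφu2, hφ2]; exact hb2.symm
                  · exact absurd rfl hu0
                · have hwS : w ∉ S := by rw [hSm]; push_neg; exact ⟨hw0, hw1, hw2⟩
                  rw [hagree u huS, hagree w hwS]
                  exact hφ'.1 u w ⟨hadj, by simpa using huS, by simpa using hwS⟩
    · intro x hxv hne
      by_cases hx0 : x = u₀
      · rw [hx0]
        refine ⟨φ' v₂, ?_⟩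
        rw [colorCount_eq_card G φ u₀ (φ' v₂) {v₂} ?_]
        · simp
        · intro w
          simp only [Finset.mem_singleton]
          constructor
          · rintro ⟨hadj, hcol⟩
            rcases (A0 w).mp hadj with rfl | rfl | rfl | rfl
            · rw [hφ1] at hcol; exact absurd hcol hp
            · rfl
            · rw [hφu1] at hcol; exact absurd hcol hd2
            · rw [hφu2] at hcol; exact absurd hcol hb2
          · rintro rfl; exact ⟨a02, hφ2⟩
      · by_cases hx1 : x = u₁
        · rw [hx1]
          refine ⟨a, ?_⟩
          rw [colorCount_eq_card G φ u₁ a {u₀} ?_]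
          · simp
          · intro w
            simp only [Finset.mem_singleton]
            constructor
            · rintro ⟨hadj, hcol⟩
              rcases (A1 w).mp hadj with rfl | rfl
              · rw [hφ1] at hcol; exact absurd hcol.symm ha1
              · rfl
            · rintro rfl; exact ⟨a0u1.symm, hφ0⟩
        · by_cases hx2 : x = u₂
          · rw [hx2]
            refine ⟨a, ?_⟩
            rw [colorCount_eq_card G φ u₂ a {u₀} ?_]
            · simp
            · intro w
              simp only [Finset.mem_singleton]
              constructor
              · rintro ⟨hadj, hcol⟩
                rcases (A2 w).mp hadj with rfl | rfl
                · rw [hφ2] at hcol; exact absurd hcol.symm ha2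
                · rfl
              · rintro rfl; exact ⟨a0u2.symm, hφ0⟩
          · by_cases hxv2 : x = v₂
            · rw [hxv2]
              refine ⟨c, ?_⟩
              rw [colorCount_congr G (GraphDel G ↑S) φ φ' v₂ c ?_]
              · exact hc
              · intro w
                constructor
                · rintro ⟨hadj, hcol⟩
                  by_cases hw0 : w = u₀
                  · subst hw0; rw [hφ0] at hcol; exact absurd hcol hac
                  · by_cases hw1 : w = u₁
                    · subst hw1
                      rcases (A1 v₂).mp hadj.symm with h' | h'
                      · exact absurd h' h12.ne'
                      · exact absurd h' a02.ne'
                    · by_cases hw2 : w = u₂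
                      · subst hw2; rw [hφu2] at hcol; exact absurd hcol hbc
                      · have hwS : w ∉ S := by rw [hSm]; push_neg; exact ⟨hw0, hw1, hw2⟩
                        exact ⟨⟨hadj, by simpa using hv2S, by simpa using hwS⟩,
                          by rw [← hagree w hwS]; exact hcol⟩
                · rintro ⟨hadj, hcol⟩
                  have hwS : w ∉ S := by simpa using hadj.2.2
                  exact ⟨hadj.1, by rw [hagree w hwS]; exact hcol⟩
            · refine outside_odd G _ φ φ' hagree hφ' x
                (by rw [hSm]; push_neg; exact ⟨hx0, hx1, hx2⟩) ?_ hne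
              intro s hs hsS
              rw [hSm] at hsS
              rcases hsS with rfl | rfl | rfl
              · rcases (A0 x).mp hs.symm with rfl | rfl | rfl | rfl
                · exact hxv rfl
                · exact hxv2 rfl
                · exact hx1 rfl
                · exact hx2 rfl
              · rcases (A1 x).mp hs.symm with rfl | rfl
                · exact hxv rfl
                · exact hx0 rfl
              · rcases (A2 x).mp hs.symm with rfl | rfl
                · exact hxv2 rfl
                · exact hx0 rfl

lemma dh_case (G : SimpleGraph V) (v₁ v₂ u₀ u₁ u₂ u₃ u₄ u₅ u₆ : V)
    (h : IsDoubleHat2 G v₁ v₂ u₀ u₁ u₂ u₃ u₄ u₅ u₆) (φ' : V → Fin 4)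
    (hφ' : IsOddColoring (GraphDel G ↑({u₀, u₁, u₂, u₃, u₄, u₅, u₆} : Finset V)) 4 φ') :
    ∃ φ : V → Fin 4, (∀ x ∉ ({u₀, u₁, u₂, u₃, u₄, u₅, u₆} : Finset V), φ x = φ' x) ∧
      ProperColoring G φ ∧
      ∀ x : V, x ≠ v₁ → (∃ u, G.Adj x u) → OddAt G φ x := by
  obtain ⟨h12, hN0, hN1, hN2, hN3, hN4, hN5, hN6⟩ := h
  set S : Finset V := {u₀, u₁, u₂, u₃, u₄, u₅, u₆} with hSdef
  have hSm : ∀ x, x ∈ S ↔ (x = u₀ ∨ x = u₁ ∨ x = u₂ ∨ x = u₃ ∨ x = u₄ ∨ x = u₅ ∨ x = u₆) := by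
    intro x; simp [hSdef]
  have A0 : ∀ w, G.Adj u₀ w ↔ (w = v₁ ∨ w = v₂ ∨ w = u₁ ∨ w = u₂ ∨ w = u₄ ∨ w = u₅) := by
    intro w; rw [← SimpleGraph.mem_neighborSet, hN0]; simp
  have A1 : ∀ w, G.Adj u₁ w ↔ (w = v₁ ∨ w = u₀ ∨ w = u₃ ∨ w = u₄) := by
    intro w; rw [← SimpleGraph.mem_neighborSet, hN1]; simp
  have A2 : ∀ w, G.Adj u₂ w ↔ (w = v₂ ∨ w = u₀ ∨ w = u₅ ∨ w = u₆) := by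
    intro w; rw [← SimpleGraph.mem_neighborSet, hN2]; simp
  have A3 : ∀ w, G.Adj u₃ w ↔ (w = v₁ ∨ w = u₁) := by
    intro w; rw [← SimpleGraph.mem_neighborSet, hN3]; simp
  have A4 : ∀ w, G.Adj u₄ w ↔ (w = u₀ ∨ w = u₁) := by
    intro w; rw [← SimpleGraph.mem_neighborSet, hN4]; simp
  have A5 : ∀ w, G.Adj u₅ w ↔ (w = u₀ ∨ w = u₂) := by
    intro w; rw [← SimpleGraph.mem_neighborSet, hN5]; simp
  have A6 : ∀ w, G.Adj u₆ w ↔ (w = v₂ ∨ w = u₂) := by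
    intro w; rw [← SimpleGraph.mem_neighborSet, hN6]; simp
  have a01 : G.Adj u₀ v₁ := (A0 v₁).mpr (Or.inl rfl)
  have a02 : G.Adj u₀ v₂ := (A0 v₂).mpr (Or.inr (Or.inl rfl))
  have a0u1 : G.Adj u₀ u₁ := (A0 u₁).mpr (Or.inr (Or.inr (Or.inl rfl)))
  have a0u2 : G.Adj u₀ u₂ := (A0 u₂).mpr (Or.inr (Or.inr (Or.inr (Or.inl rfl))))
  have a0u4 : G.Adj u₀ u₄ := (A0 u₄).mpr (Or.inr (Or.inr (Or.inr (Or.inr (Or.inl rfl)))))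
  have a0u5 : G.Adj u₀ u₅ := (A0 u₅).mpr (Or.inr (Or.inr (Or.inr (Or.inr (Or.inr rfl)))))
  have a1v1 : G.Adj u₁ v₁ := (A1 v₁).mpr (Or.inl rfl)
  have a1u3 : G.Adj u₁ u₃ := (A1 u₃).mpr (Or.inr (Or.inr (Or.inl rfl)))
  have a1u4 : G.Adj u₁ u₄ := (A1 u₄).mpr (Or.inr (Or.inr (Or.inr rfl)))
  have a2v2 : G.Adj u₂ v₂ := (A2 v₂).mpr (Or.inl rfl)
  have a2u5 : G.Adj u₂ u₅ := (A2 u₅).mpr (Or.inr (Or.inr (Or.inl rfl)))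
  have a2u6 : G.Adj u₂ u₆ := (A2 u₆).mpr (Or.inr (Or.inr (Or.inr rfl)))
  have a3v1 : G.Adj u₃ v₁ := (A3 v₁).mpr (Or.inl rfl)
  have a6v2 : G.Adj u₆ v₂ := (A6 v₂).mpr (Or.inl rfl)
  by_cases hdeg : v₁ = u₂
  · -- degenerate family: v₁ = u₂ forces u₁ = v₂
    have hu1 : u₁ = v₂ := by
      by_contra k
      have h' : G.Adj u₂ u₁ := hdeg ▸ a1v1.symm
      rcases (A2 u₁).mp h' with h1 | h1 | h1 | h1
      · exact k h1
      · exact a0u1.ne' h1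
      · -- u₁ = u₅
        rcases (A5 u₃).mp (h1 ▸ a1u3) with h2 | h2
        · -- u₃ = u₀
          rcases (A3 v₂).mp (h2 ▸ a02) with h3 | h3
          · exact h12.ne' h3
          · exact k h3.symm
        · -- u₃ = u₂ = v₁
          exact a3v1.ne (h2.trans hdeg.symm)
      · -- u₁ = u₆
        rcases (A6 u₀).mp (h1 ▸ a0u1.symm) with h2 | h2
        · exact a02.ne h2
        · exact a0u2.ne h2
    by_cases hC : u₀ = u₃
    · -- degenerate model A : K₃ component
      have hu4 : u₄ = v₁ := by
        rcases (A3 u₄).mp (hC ▸ a0u4) with h' | h'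
        · exact h'
        · exact absurd h' a1u4.ne'
      have hu5 : u₅ = v₂ := by
        rcases (A3 u₅).mp (hC ▸ a0u5) with h' | h'
        · exact absurd (h'.trans hdeg) a2u5.ne'
        · exact h'.trans hu1
      have hu6 : u₆ = u₀ := by
        have h' : G.Adj u₁ u₆ := (hu1 ▸ a6v2).symm
        rcases (A1 u₆).mp h' with h1 | h1 | h1 | h1
        · exact absurd (h1.trans hdeg) a2u6.ne'
        · exact h1
        · exact h1.trans hC.symm
        · exact absurd ((h1.trans hu4).trans hdeg) a2u6.ne'
      refine tri_case G v₁ v₂ u₀ S ?_ ?_ ?_ ?_ φ' hφ'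
      · intro x
        rw [hSm]
        constructor
        · rintro (rfl | rfl | rfl | rfl | rfl | rfl | rfl)
          · exact Or.inl rfl
          · exact Or.inr (Or.inr hu1)
          · exact Or.inr (Or.inl hdeg.symm)
          · exact Or.inl hC.symm
          · exact Or.inr (Or.inl hu4)
          · exact Or.inr (Or.inr hu5)
          · exact Or.inl hu6
        · rintro (rfl | rfl | rfl)
          · exact Or.inl rfl
          · exact Or.inr (Or.inr (Or.inr (Or.inr (Or.inl hu4.symm))))
          · exact Or.inr (Or.inl hu1.symm)
      · intro w
        rw [A0]
        constructor
        · rintro (rfl | rfl | rfl | rfl | rfl | rfl)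
          · exact Or.inl rfl
          · exact Or.inr rfl
          · exact Or.inr hu1
          · exact Or.inl hdeg.symm
          · exact Or.inl hu4
          · exact Or.inr hu5
        · rintro (rfl | rfl)
          · exact Or.inl rfl
          · exact Or.inr (Or.inl rfl)
      · intro w
        rw [hdeg, A2]
        constructor
        · rintro (rfl | rfl | rfl | rfl)
          · exact Or.inl rfl
          · exact Or.inr rfl
          · exact Or.inl hu5
          · exact Or.inr hu6
        · rintro (rfl | rfl)
          · exact Or.inl rfl
          · exact Or.inr (Or.inl rfl)
      · intro w
        rw [← hu1, A1]
        constructor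
        · rintro (rfl | rfl | rfl | rfl)
          · exact Or.inl rfl
          · exact Or.inr rfl
          · exact Or.inr hC.symm
          · exact Or.inl hu4
        · rintro (rfl | rfl)
          · exact Or.inl rfl
          · exact Or.inr (Or.inl rfl)
    · -- degenerate model B : six-vertex component
      have hu6 : u₆ = u₃ := by
        have h' : G.Adj u₁ u₆ := (hu1 ▸ a6v2).symm
        rcases (A1 u₆).mp h' with h1 | h1 | h1 | h1
        · exact absurd (h1.trans hdeg) a2u6.ne'
        · -- u₆ = u₀
          exfalso
          rcases (A6 u₄).mp (h1 ▸ a0u4) with h2 | h2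
          · exact a1u4.ne' (h2.trans hu1.symm)
          · -- u₄ = u₂ = v₁
            have h3 : G.Adj u₄ u₃ := (h2.trans hdeg.symm) ▸ a3v1.symm
            rcases (A4 u₃).mp h3 with h4 | h4
            · exact hC h4.symm
            · exact a1u3.ne' h4
        · exact h1
        · -- u₆ = u₄
          exfalso
          rcases (A4 u₂).mp (h1 ▸ a2u6).symm with h2 | h2
          · exact a0u2.ne' h2
          · exact h12.ne (hdeg.trans (h2.trans hu1))
      -- six distinct vertices: v₁ v₂ u₀ u₃ u₄ u₅ ; u₂ = v₁, u₁ = v₂, u₆ = u₃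
      have B0 : ∀ w, G.Adj u₀ w ↔ (w = v₁ ∨ w = v₂ ∨ w = u₄ ∨ w = u₅) := by
        intro w
        rw [A0]
        constructor
        · rintro (h' | h' | h' | h' | h' | h')
          · exact Or.inl h'
          · exact Or.inr (Or.inl h')
          · exact Or.inr (Or.inl (h'.trans hu1))
          · exact Or.inl (h'.trans hdeg.symm)
          · exact Or.inr (Or.inr (Or.inl h'))
          · exact Or.inr (Or.inr (Or.inr h'))
        · rintro (h' | h' | h' | h')
          · exact Or.inl h'
          · exact Or.inr (Or.inl h')
          · exact Or.inr (Or.inr (Or.inr (Or.inr (Or.inl h'))))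
          · exact Or.inr (Or.inr (Or.inr (Or.inr (Or.inr h'))))
      have Bv2 : ∀ w, G.Adj v₂ w ↔ (w = v₁ ∨ w = u₀ ∨ w = u₃ ∨ w = u₄) := by
        intro w; rw [← hu1, A1]
      have Bv1 : ∀ w, G.Adj v₁ w ↔ (w = v₂ ∨ w = u₀ ∨ w = u₅ ∨ w = u₃) := by
        intro w
        rw [hdeg, A2]
        constructor
        · rintro (h' | h' | h' | h')
          · exact Or.inl h'
          · exact Or.inr (Or.inl h')
          · exact Or.inr (Or.inr (Or.inl h'))
          · exact Or.inr (Or.inr (Or.inr (h'.trans hu6)))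
        · rintro (h' | h' | h' | h')
          · exact Or.inl h'
          · exact Or.inr (Or.inl h')
          · exact Or.inr (Or.inr (Or.inl h'))
          · exact Or.inr (Or.inr (Or.inr (h'.trans hu6.symm)))
      have B3 : ∀ w, G.Adj u₃ w ↔ (w = v₁ ∨ w = v₂) := by
        intro w
        rw [A3]
        constructor
        · rintro (h' | h')
          · exact Or.inl h'
          · exact Or.inr (h'.trans hu1)
        · rintro (h' | h')
          · exact Or.inl h'
          · exact Or.inr (h'.trans hu1.symm)
      have B4 : ∀ w, G.Adj u₄ w ↔ (w = u₀ ∨ w = v₂) := by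
        intro w
        rw [A4]
        constructor
        · rintro (h' | h')
          · exact Or.inl h'
          · exact Or.inr (h'.trans hu1)
        · rintro (h' | h')
          · exact Or.inl h'
          · exact Or.inr (h'.trans hu1.symm)
      have B5 : ∀ w, G.Adj u₅ w ↔ (w = u₀ ∨ w = v₁) := by
        intro w
        rw [A5]
        constructor
        · rintro (h' | h')
          · exact Or.inl h'
          · exact Or.inr (h'.trans hdeg.symm)
        · rintro (h' | h')
          · exact Or.inl h'
          · exact Or.inr (h'.trans hdeg)
      have a3v2 : G.Adj u₃ v₂ := (B3 v₂).mpr (Or.inr rfl)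
      have a4v2 : G.Adj u₄ v₂ := (B4 v₂).mpr (Or.inr rfl)
      have a5v1 : G.Adj u₅ v₁ := (B5 v₁).mpr (Or.inr rfl)
      have hC' : u₃ ≠ u₀ := fun h' => hC h'.symm
      have n14 : v₁ ≠ u₄ := by
        intro h'
        rcases (B4 u₃).mp (h' ▸ a3v1.symm) with h2 | h2
        · exact hC' h2
        · exact a3v2.ne h2
      have n25 : v₂ ≠ u₅ := by
        intro h'
        have h2 : G.Adj v₂ u₃ := a3v2.symm
        rcases (B5 u₃).mp (h' ▸ h2) with h3 | h3
        · exact hC' h3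
        · exact a3v1.ne h3
      have n34 : u₃ ≠ u₄ := by
        intro h'
        rcases (B4 v₁).mp (h' ▸ a3v1) with h2 | h2
        · exact a01.ne' h2
        · exact h12.ne h2
      have n35 : u₃ ≠ u₅ := by
        intro h'
        rcases (B5 v₂).mp (h' ▸ a3v2) with h2 | h2
        · exact a02.ne' h2
        · exact h12.ne' h2
      have n45 : u₄ ≠ u₅ := by
        intro h'
        rcases (B5 v₂).mp (h' ▸ a4v2) with h2 | h2
        · exact a02.ne' h2
        · exact h12.ne' h2
      have hSm6 : ∀ x, x ∈ S ↔
          (x = v₁ ∨ x = v₂ ∨ x = u₀ ∨ x = u₃ ∨ x = u₄ ∨ x = u₅) := by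
        intro x
        rw [hSm]
        constructor
        · rintro (rfl | rfl | rfl | rfl | rfl | rfl | rfl)
          · exact Or.inr (Or.inr (Or.inl rfl))
          · exact Or.inr (Or.inl hu1)
          · exact Or.inl hdeg.symm
          · exact Or.inr (Or.inr (Or.inr (Or.inl rfl)))
          · exact Or.inr (Or.inr (Or.inr (Or.inr (Or.inl rfl))))
          · exact Or.inr (Or.inr (Or.inr (Or.inr (Or.inr rfl))))
          · exact Or.inr (Or.inr (Or.inr (Or.inl hu6)))
        · rintro (rfl | rfl | rfl | rfl | rfl | rfl)
          · exact Or.inr (Or.inr (Or.inl hdeg))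
          · exact Or.inr (Or.inl hu1.symm)
          · exact Or.inl rfl
          · exact Or.inr (Or.inr (Or.inr (Or.inl rfl)))
          · exact Or.inr (Or.inr (Or.inr (Or.inr (Or.inl rfl))))
          · exact Or.inr (Or.inr (Or.inr (Or.inr (Or.inr (Or.inl rfl)))))
      classical
      set φ : V → Fin 4 := fun x => if x = v₁ then 0 else if x = v₂ then 1 else
        if x = u₀ then 2 else if x = u₃ then 3 else if x = u₄ then 3 else
        if x = u₅ then 3 else φ' x with hφdef
      have hφ1 : φ v₁ = 0 := by simp [hφdef]
      have hφ2 : φ v₂ = 1 := by simp [hφdef, h12.ne']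
      have hφ0 : φ u₀ = 2 := by simp [hφdef, a01.ne, a02.ne]
      have hφ3 : φ u₃ = 3 := by simp [hφdef, a3v1.ne, a3v2.ne, hC']
      have n41 : u₄ ≠ v₁ := Ne.symm n14
      have n43 : u₄ ≠ u₃ := Ne.symm n34
      have n52 : u₅ ≠ v₂ := Ne.symm n25
      have n53 : u₅ ≠ u₃ := Ne.symm n35
      have n54 : u₅ ≠ u₄ := Ne.symm n45
      have hφ4 : φ u₄ = 3 := by
        simp [hφdef, n41, a4v2.ne, a0u4.ne', n43]
      have hφ5 : φ u₅ = 3 := by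
        simp [hφdef, a5v1.ne, n52, a0u5.ne', n53, n54]
      have hagree : ∀ x ∉ S, φ x = φ' x := by
        intro x hx
        rw [hSm6] at hx
        push_neg at hx
        simp [hφdef, hx.1, hx.2.1, hx.2.2.1, hx.2.2.2.1, hx.2.2.2.2.1, hx.2.2.2.2.2]
      refine ⟨φ, hagree, ?_, ?_⟩
      · intro u w hadj
        by_cases q1 : u = v₁
        · subst q1
          rcases (Bv1 w).mp hadj with rfl | rfl | rfl | rfl
          · rw [hφ1, hφ2]; decide
          · rw [hφ1, hφ0]; decide
          · rw [hφ1, hφ5]; decide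
          · rw [hφ1, hφ3]; decide
        · by_cases q2 : u = v₂
          · subst q2
            rcases (Bv2 w).mp hadj with rfl | rfl | rfl | rfl
            · rw [hφ2, hφ1]; decide
            · rw [hφ2, hφ0]; decide
            · rw [hφ2, hφ3]; decide
            · rw [hφ2, hφ4]; decide
          · by_cases q0 : u = u₀
            · subst q0
              rcases (B0 w).mp hadj with rfl | rfl | rfl | rfl
              · rw [hφ0, hφ1]; decide
              · rw [hφ0, hφ2]; decide
              · rw [hφ0, hφ4]; decide
              · rw [hφ0, hφ5]; decide
            · by_cases q3 : u = u₃
              · subst q3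
                rcases (B3 w).mp hadj with rfl | rfl
                · rw [hφ3, hφ1]; decide
                · rw [hφ3, hφ2]; decide
              · by_cases q4 : u = u₄
                · subst q4
                  rcases (B4 w).mp hadj with rfl | rfl
                  · rw [hφ4, hφ0]; decide
                  · rw [hφ4, hφ2]; decide
                · by_cases q5 : u = u₅
                  · subst q5
                    rcases (B5 w).mp hadj with rfl | rfl
                    · rw [hφ5, hφ0]; decide
                    · rw [hφ5, hφ1]; decide
                  · have huS : u ∉ S := by
                      rw [hSm6]; push_neg; exact ⟨q1, q2, q0, q3, q4, q5⟩
                    have hwS : w ∉ S := by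
                      rw [hSm6]; push_neg
                      refine ⟨?_, ?_, ?_, ?_, ?_, ?_⟩ <;> rintro rfl
                      · rcases (Bv1 u).mp hadj.symm with rfl | rfl | rfl | rfl
                        · exact q2 rfl
                        · exact q0 rfl
                        · exact q5 rfl
                        · exact q3 rfl
                      · rcases (Bv2 u).mp hadj.symm with rfl | rfl | rfl | rfl
                        · exact q1 rfl
                        · exact q0 rfl
                        · exact q3 rfl
                        · exact q4 rfl
                      · rcases (B0 u).mp hadj.symm with rfl | rfl | rfl | rfl
                        · exact q1 rfl
                        · exact q2 rfl
                        · exact q4 rfl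
                        · exact q5 rfl
                      · rcases (B3 u).mp hadj.symm with rfl | rfl
                        · exact q1 rfl
                        · exact q2 rfl
                      · rcases (B4 u).mp hadj.symm with rfl | rfl
                        · exact q0 rfl
                        · exact q2 rfl
                      · rcases (B5 u).mp hadj.symm with rfl | rfl
                        · exact q0 rfl
                        · exact q1 rfl
                    rw [hagree u huS, hagree w hwS]
                    exact hφ'.1 u w ⟨hadj, by simpa using huS, by simpa using hwS⟩
      · intro x hxv hne
        by_cases q2 : x = v₂
        · rw [q2]
          refine ⟨0, ?_⟩
          rw [colorCount_eq_card G φ v₂ 0 {v₁} ?_]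
          · simp
          · intro w
            simp only [Finset.mem_singleton]
            constructor
            · rintro ⟨hadj, hcol⟩
              rcases (Bv2 w).mp hadj with rfl | rfl | rfl | rfl
              · rfl
              · rw [hφ0] at hcol; exact absurd hcol (by decide)
              · rw [hφ3] at hcol; exact absurd hcol (by decide)
              · rw [hφ4] at hcol; exact absurd hcol (by decide)
            · rintro rfl; exact ⟨h12.symm, hφ1⟩
        · by_cases q0 : x = u₀
          · rw [q0]
            refine ⟨0, ?_⟩
            rw [colorCount_eq_card G φ u₀ 0 {v₁} ?_]
            · simp
            · intro w
              simp only [Finset.mem_singleton]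
              constructor
              · rintro ⟨hadj, hcol⟩
                rcases (B0 w).mp hadj with rfl | rfl | rfl | rfl
                · rfl
                · rw [hφ2] at hcol; exact absurd hcol (by decide)
                · rw [hφ4] at hcol; exact absurd hcol (by decide)
                · rw [hφ5] at hcol; exact absurd hcol (by decide)
              · rintro rfl; exact ⟨a01, hφ1⟩
          · by_cases q3 : x = u₃
            · rw [q3]
              refine ⟨0, ?_⟩
              rw [colorCount_eq_card G φ u₃ 0 {v₁} ?_]
              · simp
              · intro w
                simp only [Finset.mem_singleton]
                constructor
                · rintro ⟨hadj, hcol⟩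
                  rcases (B3 w).mp hadj with rfl | rfl
                  · rfl
                  · rw [hφ2] at hcol; exact absurd hcol (by decide)
                · rintro rfl; exact ⟨a3v1, hφ1⟩
            · by_cases q4 : x = u₄
              · rw [q4]
                refine ⟨2, ?_⟩
                rw [colorCount_eq_card G φ u₄ 2 {u₀} ?_]
                · simp
                · intro w
                  simp only [Finset.mem_singleton]
                  constructor
                  · rintro ⟨hadj, hcol⟩
                    rcases (B4 w).mp hadj with rfl | rfl
                    · rfl
                    · rw [hφ2] at hcol; exact absurd hcol (by decide)
                  · rintro rfl; exact ⟨a0u4.symm, hφ0⟩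
              · by_cases q5 : x = u₅
                · rw [q5]
                  refine ⟨2, ?_⟩
                  rw [colorCount_eq_card G φ u₅ 2 {u₀} ?_]
                  · simp
                  · intro w
                    simp only [Finset.mem_singleton]
                    constructor
                    · rintro ⟨hadj, hcol⟩
                      rcases (B5 w).mp hadj with rfl | rfl
                      · rfl
                      · rw [hφ1] at hcol; exact absurd hcol (by decide)
                    · rintro rfl; exact ⟨a0u5.symm, hφ0⟩
                · refine outside_odd G _ φ φ' hagree hφ' x
                    (by rw [hSm6]; push_neg; exact ⟨hxv, q2, q0, q3, q4, q5⟩) ?_ hne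
                  intro s hs hsS
                  rw [hSm6] at hsS
                  rcases hsS with rfl | rfl | rfl | rfl | rfl | rfl
                  · rcases (Bv1 x).mp hs.symm with rfl | rfl | rfl | rfl
                    · exact q2 rfl
                    · exact q0 rfl
                    · exact q5 rfl
                    · exact q3 rfl
                  · rcases (Bv2 x).mp hs.symm with rfl | rfl | rfl | rfl
                    · exact hxv rfl
                    · exact q0 rfl
                    · exact q3 rfl
                    · exact q4 rfl
                  · rcases (B0 x).mp hs.symm with rfl | rfl | rfl | rfl
                    · exact hxv rfl
                    · exact q2 rfl
                    · exact q4 rfl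
                    · exact q5 rfl
                  · rcases (B3 x).mp hs.symm with rfl | rfl
                    · exact hxv rfl
                    · exact q2 rfl
                  · rcases (B4 x).mp hs.symm with rfl | rfl
                    · exact q0 rfl
                    · exact q2 rfl
                  · rcases (B5 x).mp hs.symm with rfl | rfl
                    · exact q0 rfl
                    · exact hxv rfl

  · -- nondegenerate case
    have n21 : v₂ ≠ u₁ := by
      intro hB
      have h' : G.Adj u₁ u₂ := hB ▸ a2v2.symm
      rcases (A1 u₂).mp h' with h1 | h1 | h1 | h1
      · exact hdeg h1.symm
      · exact a0u2.ne' h1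
      · -- u₂ = u₃
        rcases (A3 u₅).mp (h1 ▸ a2u5) with h2 | h2
        · -- u₅ = v₁
          rcases (A5 v₂).mp (h2.symm ▸ h12) with h3 | h3
          · exact a02.ne' h3
          · exact a2v2.ne' h3
        · -- u₅ = u₁
          have h3 : G.Adj u₅ v₁ := h2.symm ▸ a1v1
          rcases (A5 v₁).mp h3 with h4 | h4
          · exact a01.ne' h4
          · exact hdeg h4
      · -- u₂ = u₄
        rcases (A4 u₆).mp (h1 ▸ a2u6) with h2 | h2
        · -- u₆ = u₀
          rcases (A6 u₅).mp (h2.symm ▸ a0u5) with h3 | h3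
          · -- u₅ = v₂ = u₁
            have h4 : G.Adj u₅ v₁ := (h3.trans hB).symm ▸ a1v1
            rcases (A5 v₁).mp h4 with h5 | h5
            · exact a01.ne' h5
            · exact hdeg h5
          · exact a2u5.ne' h3
        · -- u₆ = u₁ = v₂
          exact G.loopless.irrefl v₂ ((h2.trans hB.symm) ▸ a6v2)
    have n_v1u4 : v₁ ≠ u₄ := by
      intro h'
      rcases (A4 v₂).mp (h' ▸ h12) with h2 | h2
      · exact a02.ne' h2
      · exact n21 h2
    have n_v1u5 : v₁ ≠ u₅ := by
      intro h'
      rcases (A5 v₂).mp (h' ▸ h12) with h2 | h2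
      · exact a02.ne' h2
      · exact a2v2.ne' h2
    have n_v1u6 : v₁ ≠ u₆ := by
      intro h'
      rcases (A6 u₀).mp (h' ▸ a01.symm) with h2 | h2
      · exact a02.ne h2
      · exact a0u2.ne h2
    have n_v2u3 : v₂ ≠ u₃ := by
      intro h'
      rcases (A3 u₀).mp (h' ▸ a02.symm) with h2 | h2
      · exact a01.ne h2
      · exact a0u1.ne h2
    have n_v2u4 : v₂ ≠ u₄ := by
      intro h'
      rcases (A4 v₁).mp (h' ▸ h12.symm) with h2 | h2
      · exact a01.ne' h2
      · exact a1v1.ne' h2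
    have n_v2u5 : v₂ ≠ u₅ := by
      intro h'
      rcases (A5 v₁).mp (h' ▸ h12.symm) with h2 | h2
      · exact a01.ne' h2
      · exact hdeg h2
    have n_u0u3 : u₀ ≠ u₃ := by
      intro h'
      rcases (A3 v₂).mp (h' ▸ a02) with h2 | h2
      · exact h12.ne' h2
      · exact n21 h2
    have n_u0u6 : u₀ ≠ u₆ := by
      intro h'
      rcases (A6 v₁).mp (h' ▸ a01) with h2 | h2
      · exact h12.ne h2
      · exact hdeg h2
    have n_u1u2 : u₁ ≠ u₂ := by
      intro h'
      rcases (A2 v₁).mp (h' ▸ a1v1) with h2 | h2 | h2 | h2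
      · exact h12.ne h2
      · exact a01.ne' h2
      · exact n_v1u5 h2
      · exact n_v1u6 h2
    have n_u1u5 : u₁ ≠ u₅ := by
      intro h'
      rcases (A5 v₁).mp (h' ▸ a1v1) with h2 | h2
      · exact a01.ne' h2
      · exact hdeg h2
    have n_u1u6 : u₁ ≠ u₆ := by
      intro h'
      rcases (A6 v₁).mp (h' ▸ a1v1) with h2 | h2
      · exact h12.ne h2
      · exact hdeg h2
    have n_u2u3 : u₂ ≠ u₃ := by
      intro h'
      rcases (A3 v₂).mp (h' ▸ a2v2) with h2 | h2
      · exact h12.ne' h2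
      · exact n21 h2
    have n_u2u4 : u₂ ≠ u₄ := by
      intro h'
      rcases (A4 v₂).mp (h' ▸ a2v2) with h2 | h2
      · exact a02.ne' h2
      · exact n21 h2
    have n_u3u4 : u₃ ≠ u₄ := by
      intro h'
      rcases (A4 v₁).mp (h' ▸ a3v1) with h2 | h2
      · exact a01.ne' h2
      · exact a1v1.ne' h2
    have n_u3u5 : u₃ ≠ u₅ := by
      intro h'
      rcases (A5 v₁).mp (h' ▸ a3v1) with h2 | h2
      · exact a01.ne' h2
      · exact hdeg h2
    have n_u3u6 : u₃ ≠ u₆ := by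
      intro h'
      rcases (A6 v₁).mp (h' ▸ a3v1) with h2 | h2
      · exact h12.ne h2
      · exact hdeg h2
    have n_u4u5 : u₄ ≠ u₅ := by
      intro h'
      rcases (A5 u₁).mp (h' ▸ a1u4.symm) with h2 | h2
      · exact a0u1.ne' h2
      · exact n_u1u2 h2
    have n_u4u6 : u₄ ≠ u₆ := by
      intro h'
      rcases (A6 u₁).mp (h' ▸ a1u4.symm) with h2 | h2
      · exact n21 h2.symm
      · exact n_u1u2 h2
    have n_u5u6 : u₅ ≠ u₆ := by
      intro h'
      rcases (A6 u₀).mp (h' ▸ a0u5.symm) with h2 | h2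
      · exact a02.ne h2
      · exact a0u2.ne h2
    have hv1S : v₁ ∉ S := by
      rw [hSm]; push_neg
      exact ⟨a01.ne', a1v1.ne', hdeg, a3v1.ne', n_v1u4, n_v1u5, n_v1u6⟩
    have hv2S : v₂ ∉ S := by
      rw [hSm]; push_neg
      exact ⟨a02.ne', n21, a2v2.ne', n_v2u3, n_v2u4, n_v2u5, a6v2.ne'⟩
    have hd12 : (GraphDel G ↑S).Adj v₁ v₂ :=
      ⟨h12, by simpa using hv1S, by simpa using hv2S⟩
    have hp : φ' v₁ ≠ φ' v₂ := hφ'.1 v₁ v₂ hd12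
    obtain ⟨c, hc⟩ := hφ'.2 v₂ ⟨v₁, hd12.symm⟩
    obtain ⟨a, b, ha1, ha2, hb1, hb2, hab, hbc⟩ := pickAB (φ' v₁) (φ' v₂) c hp
    classical
    set φ : V → Fin 4 := fun x => if x = u₀ then a else if x = u₁ then b else
      if x = u₂ then b else if x = u₃ then φ' v₂ else if x = u₄ then φ' v₁ else
      if x = u₅ then φ' v₁ else if x = u₆ then a else φ' x with hφdef
    have hφu0 : φ u₀ = a := by simp [hφdef]
    have hφu1 : φ u₁ = b := by simp [hφdef, a0u1.ne']
    have hφu2 : φ u₂ = b := by simp [hφdef, a0u2.ne', n_u1u2.symm]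
    have hφu3 : φ u₃ = φ' v₂ := by
      simp [hφdef, n_u0u3.symm, a1u3.ne', n_u2u3.symm]
    have hφu4 : φ u₄ = φ' v₁ := by
      simp [hφdef, a0u4.ne', a1u4.ne', n_u2u4.symm, n_u3u4.symm]
    have hφu5 : φ u₅ = φ' v₁ := by
      simp [hφdef, a0u5.ne', n_u1u5.symm, a2u5.ne', n_u3u5.symm, n_u4u5.symm]
    have hφu6 : φ u₆ = a := by
      simp [hφdef, n_u0u6.symm, n_u1u6.symm, a2u6.ne', n_u3u6.symm, n_u4u6.symm, n_u5u6.symm]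
    have hagree : ∀ x ∉ S, φ x = φ' x := by
      intro x hx
      rw [hSm] at hx
      push_neg at hx
      simp [hφdef, hx.1, hx.2.1, hx.2.2.1, hx.2.2.2.1, hx.2.2.2.2.1,
        hx.2.2.2.2.2.1, hx.2.2.2.2.2.2]
    have hφ1 : φ v₁ = φ' v₁ := hagree v₁ hv1S
    have hφ2 : φ v₂ = φ' v₂ := hagree v₂ hv2S
    have nadj21 : ¬ G.Adj v₂ u₁ := by
      intro h'
      rcases (A1 v₂).mp h'.symm with h2 | h2 | h2 | h2
      · exact h12.ne' h2
      · exact a02.ne' h2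
      · exact n_v2u3 h2
      · exact n_v2u4 h2
    have nadj23 : ¬ G.Adj v₂ u₃ := by
      intro h'
      rcases (A3 v₂).mp h'.symm with h2 | h2
      · exact h12.ne' h2
      · exact n21 h2
    have nadj24 : ¬ G.Adj v₂ u₄ := by
      intro h'
      rcases (A4 v₂).mp h'.symm with h2 | h2
      · exact a02.ne' h2
      · exact n21 h2
    have nadj25 : ¬ G.Adj v₂ u₅ := by
      intro h'
      rcases (A5 v₂).mp h'.symm with h2 | h2
      · exact a02.ne' h2
      · exact a2v2.ne' h2
    refine ⟨φ, hagree, ?_, ?_⟩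
    · intro u w hadj
      by_cases q0 : u = u₀
      · subst q0
        rcases (A0 w).mp hadj with rfl | rfl | rfl | rfl | rfl | rfl
        · rw [hφu0, hφ1]; exact ha1
        · rw [hφu0, hφ2]; exact ha2
        · rw [hφu0, hφu1]; exact hab
        · rw [hφu0, hφu2]; exact hab
        · rw [hφu0, hφu4]; exact ha1
        · rw [hφu0, hφu5]; exact ha1
      · by_cases q1 : u = u₁
        · subst q1
          rcases (A1 w).mp hadj with rfl | rfl | rfl | rfl
          · rw [hφu1, hφ1]; exact hb1
          · rw [hφu1, hφu0]; exact hab.symm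
          · rw [hφu1, hφu3]; exact hb2
          · rw [hφu1, hφu4]; exact hb1
        · by_cases q2 : u = u₂
          · subst q2
            rcases (A2 w).mp hadj with rfl | rfl | rfl | rfl
            · rw [hφu2, hφ2]; exact hb2
            · rw [hφu2, hφu0]; exact hab.symm
            · rw [hφu2, hφu5]; exact hb1
            · rw [hφu2, hφu6]; exact hab.symm
          · by_cases q3 : u = u₃
            · subst q3
              rcases (A3 w).mp hadj with rfl | rfl
              · rw [hφu3, hφ1]; exact hp.symm
              · rw [hφu3, hφu1]; exact hb2.symm
            · by_cases q4 : u = u₄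
              · subst q4
                rcases (A4 w).mp hadj with rfl | rfl
                · rw [hφu4, hφu0]; exact ha1.symm
                · rw [hφu4, hφu1]; exact hb1.symm
              · by_cases q5 : u = u₅
                · subst q5
                  rcases (A5 w).mp hadj with rfl | rfl
                  · rw [hφu5, hφu0]; exact ha1.symm
                  · rw [hφu5, hφu2]; exact hb1.symm
                · by_cases q6 : u = u₆
                  · subst q6
                    rcases (A6 w).mp hadj with rfl | rfl
                    · rw [hφu6, hφ2]; exact ha2
                    · rw [hφu6, hφu2]; exact hab
                  · have huS : u ∉ S := by
                      rw [hSm]; push_neg; exact ⟨q0, q1, q2, q3, q4, q5, q6⟩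
                    by_cases r0 : w = u₀
                    · subst r0
                      rcases (A0 u).mp hadj.symm with rfl | rfl | rfl | rfl | rfl | rfl
                      · rw [hφu0, hφ1]; exact ha1.symm
                      · rw [hφu0, hφ2]; exact ha2.symm
                      · exact absurd rfl q1
                      · exact absurd rfl q2
                      · exact absurd rfl q4
                      · exact absurd rfl q5
                    · by_cases r1 : w = u₁
                      · subst r1
                        rcases (A1 u).mp hadj.symm with rfl | rfl | rfl | rfl
                        · rw [hφu1, hφ1]; exact hb1.symm
                        · exact absurd rfl q0
                        · exact absurd rfl q3
                        · exact absurd rfl q4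
                      · by_cases r2 : w = u₂
                        · subst r2
                          rcases (A2 u).mp hadj.symm with rfl | rfl | rfl | rfl
                          · rw [hφu2, hφ2]; exact hb2.symm
                          · exact absurd rfl q0
                          · exact absurd rfl q5
                          · exact absurd rfl q6
                        · by_cases r3 : w = u₃
                          · subst r3
                            rcases (A3 u).mp hadj.symm with rfl | rfl
                            · rw [hφu3, hφ1]; exact hp
                            · exact absurd rfl q1
                          · by_cases r4 : w = u₄
                            · subst r4
                              rcases (A4 u).mp hadj.symm with rfl | rfl
                              · exact absurd rfl q0
                              · exact absurd rfl q1
                            · by_cases r5 : w = u₅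
                              · subst r5
                                rcases (A5 u).mp hadj.symm with rfl | rfl
                                · exact absurd rfl q0
                                · exact absurd rfl q2
                              · by_cases r6 : w = u₆
                                · subst r6
                                  rcases (A6 u).mp hadj.symm with rfl | rfl
                                  · rw [hφu6, hφ2]; exact ha2.symm
                                  · exact absurd rfl q2
                                · have hwS : w ∉ S := by
                                    rw [hSm]; push_neg
                                    exact ⟨r0, r1, r2, r3, r4, r5, r6⟩
                                  rw [hagree u huS, hagree w hwS]
                                  exact hφ'.1 u w
                                    ⟨hadj, by simpa using huS, by simpa using hwS⟩
    · intro x hxv hne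
      by_cases q0 : x = u₀
      · rw [q0]
        refine ⟨φ' v₂, ?_⟩
        rw [colorCount_eq_card G φ u₀ (φ' v₂) {v₂} ?_]
        · simp
        · intro w
          simp only [Finset.mem_singleton]
          constructor
          · rintro ⟨hadj, hcol⟩
            rcases (A0 w).mp hadj with rfl | rfl | rfl | rfl | rfl | rfl
            · rw [hφ1] at hcol; exact absurd hcol hp
            · rfl
            · rw [hφu1] at hcol; exact absurd hcol hb2
            · rw [hφu2] at hcol; exact absurd hcol hb2
            · rw [hφu4] at hcol; exact absurd hcol hp
            · rw [hφu5] at hcol; exact absurd hcol hp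
          · rintro rfl; exact ⟨a02, hφ2⟩
      · by_cases q1 : x = u₁
        · rw [q1]
          refine ⟨a, ?_⟩
          rw [colorCount_eq_card G φ u₁ a {u₀} ?_]
          · simp
          · intro w
            simp only [Finset.mem_singleton]
            constructor
            · rintro ⟨hadj, hcol⟩
              rcases (A1 w).mp hadj with rfl | rfl | rfl | rfl
              · rw [hφ1] at hcol; exact absurd hcol.symm ha1
              · rfl
              · rw [hφu3] at hcol; exact absurd hcol.symm ha2
              · rw [hφu4] at hcol; exact absurd hcol.symm ha1
            · rintro rfl; exact ⟨a0u1.symm, hφu0⟩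
        · by_cases q2 : x = u₂
          · rw [q2]
            refine ⟨φ' v₂, ?_⟩
            rw [colorCount_eq_card G φ u₂ (φ' v₂) {v₂} ?_]
            · simp
            · intro w
              simp only [Finset.mem_singleton]
              constructor
              · rintro ⟨hadj, hcol⟩
                rcases (A2 w).mp hadj with rfl | rfl | rfl | rfl
                · rfl
                · rw [hφu0] at hcol; exact absurd hcol ha2
                · rw [hφu5] at hcol; exact absurd hcol hp
                · rw [hφu6] at hcol; exact absurd hcol ha2
              · rintro rfl; exact ⟨a2v2, hφ2⟩
          · by_cases q3 : x = u₃
            · rw [q3]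
              refine ⟨b, ?_⟩
              rw [colorCount_eq_card G φ u₃ b {u₁} ?_]
              · simp
              · intro w
                simp only [Finset.mem_singleton]
                constructor
                · rintro ⟨hadj, hcol⟩
                  rcases (A3 w).mp hadj with rfl | rfl
                  · rw [hφ1] at hcol; exact absurd hcol.symm hb1
                  · rfl
                · rintro rfl; exact ⟨a1u3.symm, hφu1⟩
            · by_cases q4 : x = u₄
              · rw [q4]
                refine ⟨b, ?_⟩
                rw [colorCount_eq_card G φ u₄ b {u₁} ?_]
                · simp
                · intro w
                  simp only [Finset.mem_singleton]
                  constructor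
                  · rintro ⟨hadj, hcol⟩
                    rcases (A4 w).mp hadj with rfl | rfl
                    · rw [hφu0] at hcol; exact absurd hcol hab
                    · rfl
                  · rintro rfl; exact ⟨a1u4.symm, hφu1⟩
              · by_cases q5 : x = u₅
                · rw [q5]
                  refine ⟨b, ?_⟩
                  rw [colorCount_eq_card G φ u₅ b {u₂} ?_]
                  · simp
                  · intro w
                    simp only [Finset.mem_singleton]
                    constructor
                    · rintro ⟨hadj, hcol⟩
                      rcases (A5 w).mp hadj with rfl | rfl
                      · rw [hφu0] at hcol; exact absurd hcol hab
                      · rfl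
                    · rintro rfl; exact ⟨a2u5.symm, hφu2⟩
                · by_cases q6 : x = u₆
                  · rw [q6]
                    refine ⟨b, ?_⟩
                    rw [colorCount_eq_card G φ u₆ b {u₂} ?_]
                    · simp
                    · intro w
                      simp only [Finset.mem_singleton]
                      constructor
                      · rintro ⟨hadj, hcol⟩
                        rcases (A6 w).mp hadj with rfl | rfl
                        · rw [hφ2] at hcol; exact absurd hcol.symm hb2
                        · rfl
                      · rintro rfl; exact ⟨a2u6.symm, hφu2⟩
                  · by_cases qv2 : x = v₂
                    · rw [qv2]
                      refine ⟨c, ?_⟩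
                      by_cases hca : a = c
                      · -- two new neighbours of colour c appear
                        set t : Finset V := Finset.univ.filter
                          (fun u => (GraphDel G ↑S).Adj v₂ u ∧ φ' u = c) with htdef
                        have hct : colorCount (GraphDel G ↑S) φ' v₂ c = t.card :=
                          colorCount_eq_card _ _ _ _ t (fun u => by
                            simp only [htdef, Finset.mem_filter, Finset.mem_univ, true_and])
                        have hu0t : u₀ ∉ t := by
                          intro hmem
                          have := (Finset.mem_filter.mp hmem).2.1.2.2
                          simp [hSm] at this
                        have hu6t : u₆ ∉ t := by
                          intro hmem
                          have := (Finset.mem_filter.mp hmem).2.1.2.2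
                          simp [hSm] at this
                        have hmem : ∀ w, (G.Adj v₂ w ∧ φ w = c) ↔
                            w ∈ insert u₀ (insert u₆ t) := by
                          intro w
                          simp only [Finset.mem_insert, htdef, Finset.mem_filter,
                            Finset.mem_univ, true_and]
                          constructor
                          · rintro ⟨hadj, hcol⟩
                            by_cases r0 : w = u₀
                            · exact Or.inl r0
                            by_cases r6 : w = u₆
                            · exact Or.inr (Or.inl r6)
                            by_cases r1 : w = u₁
                            · exact absurd (r1 ▸ hadj) nadj21
                            by_cases r2 : w = u₂
                            · rw [r2, hφu2] at hcol; exact absurd hcol hbc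
                            by_cases r3 : w = u₃
                            · exact absurd (r3 ▸ hadj) nadj23
                            by_cases r4 : w = u₄
                            · exact absurd (r4 ▸ hadj) nadj24
                            by_cases r5 : w = u₅
                            · exact absurd (r5 ▸ hadj) nadj25
                            have hwS : w ∉ S := by
                              rw [hSm]; push_neg; exact ⟨r0, r1, r2, r3, r4, r5, r6⟩
                            exact Or.inr (Or.inr ⟨⟨hadj, by simpa using hv2S,
                              by simpa using hwS⟩, by rw [← hagree w hwS]; exact hcol⟩)
                          · rintro (rfl | rfl | ⟨hadj, hcol⟩)
                            · exact ⟨a02.symm, hφu0.trans hca⟩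
                            · exact ⟨a6v2.symm, hφu6.trans hca⟩
                            · have hwS : w ∉ S := by simpa using hadj.2.2
                              exact ⟨hadj.1, by rw [hagree w hwS]; exact hcol⟩
                        have hcard : colorCount G φ v₂ c = t.card + 2 := by
                          rw [colorCount_eq_card G φ v₂ c _ hmem,
                            Finset.card_insert_of_notMem, Finset.card_insert_of_notMem hu6t]
                          simp only [Finset.mem_insert]
                          rintro (h' | h')
                          · exact n_u0u6 h'
                          · exact hu0t h'
                        rw [hcard]
                        rw [hct] at hc
                        obtain ⟨k, hk⟩ := hc
                        exact ⟨k + 1, by omega⟩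
                      · rw [colorCount_congr G (GraphDel G ↑S) φ φ' v₂ c ?_]
                        · exact hc
                        · intro w
                          constructor
                          · rintro ⟨hadj, hcol⟩
                            by_cases r0 : w = u₀
                            · rw [r0, hφu0] at hcol; exact absurd hcol hca
                            by_cases r6 : w = u₆
                            · rw [r6, hφu6] at hcol; exact absurd hcol hca
                            by_cases r1 : w = u₁
                            · exact absurd (r1 ▸ hadj) nadj21
                            by_cases r2 : w = u₂
                            · rw [r2, hφu2] at hcol; exact absurd hcol hbc
                            by_cases r3 : w = u₃
                            · exact absurd (r3 ▸ hadj) nadj23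
                            by_cases r4 : w = u₄
                            · exact absurd (r4 ▸ hadj) nadj24
                            by_cases r5 : w = u₅
                            · exact absurd (r5 ▸ hadj) nadj25
                            have hwS : w ∉ S := by
                              rw [hSm]; push_neg; exact ⟨r0, r1, r2, r3, r4, r5, r6⟩
                            exact ⟨⟨hadj, by simpa using hv2S, by simpa using hwS⟩,
                              by rw [← hagree w hwS]; exact hcol⟩
                          · rintro ⟨hadj, hcol⟩
                            have hwS : w ∉ S := by simpa using hadj.2.2
                            exact ⟨hadj.1, by rw [hagree w hwS]; exact hcol⟩
                    · refine outside_odd G _ φ φ' hagree hφ' x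
                        (by rw [hSm]; push_neg; exact ⟨q0, q1, q2, q3, q4, q5, q6⟩) ?_ hne
                      intro s hs hsS
                      rw [hSm] at hsS
                      rcases hsS with rfl | rfl | rfl | rfl | rfl | rfl | rfl
                      · rcases (A0 x).mp hs.symm with rfl | rfl | rfl | rfl | rfl | rfl
                        · exact hxv rfl
                        · exact qv2 rfl
                        · exact q1 rfl
                        · exact q2 rfl
                        · exact q4 rfl
                        · exact q5 rfl
                      · rcases (A1 x).mp hs.symm with rfl | rfl | rfl | rfl
                        · exact hxv rfl
                        · exact q0 rfl
                        · exact q3 rfl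
                        · exact q4 rfl
                      · rcases (A2 x).mp hs.symm with rfl | rfl | rfl | rfl
                        · exact qv2 rfl
                        · exact q0 rfl
                        · exact q5 rfl
                        · exact q6 rfl
                      · rcases (A3 x).mp hs.symm with rfl | rfl
                        · exact hxv rfl
                        · exact q1 rfl
                      · rcases (A4 x).mp hs.symm with rfl | rfl
                        · exact q0 rfl
                        · exact q1 rfl
                      · rcases (A5 x).mp hs.symm with rfl | rfl
                        · exact q0 rfl
                        · exact q2 rfl
                      · rcases (A6 x).mp hs.symm with rfl | rfl
                        · exact qv2 rfl
                        · exact q2 rfl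



end Cases
/-- Extension lemma for 2-trees: if `B({v₁,v₂},u₀)` is an ear, hat, or
double hat with internal vertex set `S` and `G - S` has an odd 4-coloring `φ'`, then
`φ'` extends to a proper 4-coloring of `G` in which every non-isolated vertex other
than `v₁` satisfies the odd condition. -/
theorem two_tree_extension {V : Type*} [Fintype V] [DecidableEq V]
    (G : SimpleGraph V) (hG : IsKTree 2 G) (v₁ v₂ u₀ : V) (S : Finset V)
    (hB : (S = {u₀} ∧ IsEar2 G v₁ v₂ u₀) ∨
      (∃ u₁ u₂, S = {u₀, u₁, u₂} ∧ IsHat2 G v₁ v₂ u₀ u₁ u₂) ∨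
      (∃ u₁ u₂ u₃ u₄ u₅ u₆, S = {u₀, u₁, u₂, u₃, u₄, u₅, u₆} ∧
        IsDoubleHat2 G v₁ v₂ u₀ u₁ u₂ u₃ u₄ u₅ u₆))
    (φ' : V → Fin 4) (hφ' : IsOddColoring (GraphDel G ↑S) 4 φ') :
    ∃ φ : V → Fin 4, (∀ x ∉ S, φ x = φ' x) ∧ ProperColoring G φ ∧
      ∀ x : V, x ≠ v₁ → (∃ u, G.Adj x u) → OddAt G φ x := by
  rcases hB with ⟨hS, hE⟩ | ⟨u₁, u₂, hS, hH⟩ | ⟨u₁, u₂, u₃, u₄, u₅, u₆, hS, hD⟩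
  · subst hS; exact ear_case G v₁ v₂ u₀ hE φ' hφ'
  · subst hS; exact hat_case G v₁ v₂ u₀ u₁ u₂ hH φ' hφ'
  · subst hS; exact dh_case G v₁ v₂ u₀ u₁ u₂ u₃ u₄ u₅ u₆ hD φ' hφ'
end

section
/- Let G be a graph, {v₁,v₂,v₃} a triangle, and u₀, w₀ two vertices with N_G(u₀) = N_G(w₀) = {v₁,v₂,v₃} (a T⁽³⁾_{2,0,0} configuration). If G − {u₀,w₀} admits an odd 5-coloring, then G admits an odd 5-coloring: assign u₀ and w₀ the same color not used on {v₁,v₂,v₃}; then for every vertex x of G−{u₀,w₀} and every color c, the parities of |φ⁻¹(c)∩N_G(x)| and |φ⁻¹(c)∩N_{G−{u₀,w₀}}(x)| agree. -/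
open SimpleGraph Finset
open scoped Classical

lemma graphDel_adj {V : Type*} (G : SimpleGraph V) (S : Set V) (x y : V) :
    (GraphDel G S).Adj x y ↔ G.Adj x y ∧ x ∉ S ∧ y ∉ S := Iff.rfl

/-- Two ears over a common triangle (a `𝓣⁽³⁾_{2,0,0}` configuration):
if `N(u₀) = N(w₀) = {v₁,v₂,v₃}` and `G - {u₀,w₀}` is odd 5-colorable, then so is `G`. -/
theorem two_ears_reduction {V : Type*} [Fintype V] (G : SimpleGraph V)
    (v₁ v₂ v₃ u₀ w₀ : V)
    (htri : G.Adj v₁ v₂ ∧ G.Adj v₂ v₃ ∧ G.Adj v₁ v₃) (hne : u₀ ≠ w₀)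
    (hu : G.neighborSet u₀ = {v₁, v₂, v₃}) (hw : G.neighborSet w₀ = {v₁, v₂, v₃})
    (h : OddColorable (GraphDel G {u₀, w₀}) 5) :
    OddColorable G 5 := by
  obtain ⟨φ, hφp, hφodd⟩ := h
  have hadj : ∀ x, G.Adj u₀ x ↔ (x = v₁ ∨ x = v₂ ∨ x = v₃) := by
    intro x
    have := Set.ext_iff.mp hu x
    simpa [SimpleGraph.mem_neighborSet] using this
  have hadjw : ∀ x, G.Adj w₀ x ↔ (x = v₁ ∨ x = v₂ ∨ x = v₃) := by
    intro x
    have := Set.ext_iff.mp hw x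
    simpa [SimpleGraph.mem_neighborSet] using this
  -- the vᵢ are distinct from u₀ and w₀
  have hneS : ∀ x, (x = v₁ ∨ x = v₂ ∨ x = v₃) → x ≠ u₀ ∧ x ≠ w₀ := by
    intro x hx
    have h1 : G.Adj u₀ x := (hadj x).2 hx
    have h2 : G.Adj w₀ x := (hadjw x).2 hx
    exact ⟨fun he => G.loopless.irrefl _ (he ▸ h1), fun he => G.loopless.irrefl _ (he ▸ h2)⟩
  have hv1 : v₁ ≠ u₀ ∧ v₁ ≠ w₀ := hneS v₁ (Or.inl rfl)
  have hv2 : v₂ ≠ u₀ ∧ v₂ ≠ w₀ := hneS v₂ (Or.inr (Or.inl rfl))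
  have hv3 : v₃ ≠ u₀ ∧ v₃ ≠ w₀ := hneS v₃ (Or.inr (Or.inr rfl))
  have hSmem : ∀ x : V, x ∈ ({u₀, w₀} : Set V) ↔ (x = u₀ ∨ x = w₀) := by
    intro x; simp
  have hnuw : ¬ G.Adj u₀ w₀ := by
    intro hA
    have := hneS w₀ ((hadj w₀).1 hA)
    exact this.2 rfl
  -- adjacency in the deleted graph for triangle vertices
  have hG'12 : (GraphDel G {u₀, w₀}).Adj v₁ v₂ := by
    rw [graphDel_adj]
    exact ⟨htri.1, by rw [hSmem]; tauto, by rw [hSmem]; tauto⟩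
  have hG'23 : (GraphDel G {u₀, w₀}).Adj v₂ v₃ := by
    rw [graphDel_adj]
    exact ⟨htri.2.1, by rw [hSmem]; tauto, by rw [hSmem]; tauto⟩
  have hG'13 : (GraphDel G {u₀, w₀}).Adj v₁ v₃ := by
    rw [graphDel_adj]
    exact ⟨htri.2.2, by rw [hSmem]; tauto, by rw [hSmem]; tauto⟩
  have h12 : φ v₁ ≠ φ v₂ := hφp _ _ hG'12
  have h13 : φ v₁ ≠ φ v₃ := hφp _ _ hG'13
  have h23 : φ v₂ ≠ φ v₃ := hφp _ _ hG'23
  -- choose a color not used on the triangle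
  obtain ⟨c₀, hc₀⟩ : ∃ c₀ : Fin 5, c₀ ∉ ({φ v₁, φ v₂, φ v₃} : Finset (Fin 5)) := by
    by_contra h'
    push_neg at h'
    have hsub : (Finset.univ : Finset (Fin 5)) ⊆ {φ v₁, φ v₂, φ v₃} :=
      fun c _ => h' c
    have hle := Finset.card_le_card hsub
    have h3 : ({φ v₁, φ v₂, φ v₃} : Finset (Fin 5)).card ≤ 3 := by
      apply le_trans (Finset.card_insert_le _ _)
      exact Nat.succ_le_succ (le_trans (Finset.card_insert_le _ _) (by simp))
    simp [Finset.card_univ] at hle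
    omega
  simp only [Finset.mem_insert, Finset.mem_singleton] at hc₀
  push_neg at hc₀
  set ψ : V → Fin 5 := fun x => if x = u₀ ∨ x = w₀ then c₀ else φ x with hψ
  have hψu : ψ u₀ = c₀ := by simp [hψ]
  have hψw : ψ w₀ = c₀ := by simp [hψ]
  have hψo : ∀ x, x ≠ u₀ → x ≠ w₀ → ψ x = φ x := by
    intro x h1 h2; simp [hψ, h1, h2]
  -- key parity lemma
  have key : ∀ x, x ≠ u₀ → x ≠ w₀ → ∀ c : Fin 5,
      colorCount G ψ x c % 2 = colorCount (GraphDel G {u₀, w₀}) φ x c % 2 := by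
    intro x hx1 hx2 c
    have hsplit := Finset.card_filter_add_card_filter_not
      (s := Finset.univ.filter (fun u => G.Adj x u ∧ ψ u = c))
      (p := fun u => u = u₀ ∨ u = w₀)
    have h2 : ((Finset.univ.filter (fun u => G.Adj x u ∧ ψ u = c)).filter
        (fun u => ¬(u = u₀ ∨ u = w₀)))
        = Finset.univ.filter (fun u => (GraphDel G {u₀, w₀}).Adj x u ∧ φ u = c) := by
      ext u
      simp only [Finset.mem_filter, Finset.mem_univ, true_and, graphDel_adj, hSmem]
      constructor
      · rintro ⟨⟨ha, hc⟩, hu'⟩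
        push_neg at hu'
        refine ⟨⟨ha, by tauto, by tauto⟩, ?_⟩
        rw [← hψo u hu'.1 hu'.2]; exact hc
      · rintro ⟨⟨ha, hxS, huS⟩, hc⟩
        push_neg at huS
        exact ⟨⟨ha, by rw [hψo u huS.1 huS.2]; exact hc⟩, by tauto⟩
    have hTeven : Even (((Finset.univ.filter (fun u => G.Adj x u ∧ ψ u = c)).filter
        (fun u => u = u₀ ∨ u = w₀)).card) := by
      by_cases hcase : G.Adj x u₀ ∧ c₀ = c
      · have hT : ((Finset.univ.filter (fun u => G.Adj x u ∧ ψ u = c)).filter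
            (fun u => u = u₀ ∨ u = w₀)) = {u₀, w₀} := by
          ext u
          simp only [Finset.mem_filter, Finset.mem_univ, true_and, Finset.mem_insert,
            Finset.mem_singleton]
          constructor
          · tauto
          · rintro h'
            refine ⟨?_, h'⟩
            rcases h' with h' | h' <;> rw [h']
            · exact ⟨hcase.1, by rw [hψu]; exact hcase.2⟩
            · have hxw : G.Adj x w₀ := by
                have hx3 := (hadj x).1 hcase.1.symm
                exact ((hadjw x).2 hx3).symm
              exact ⟨hxw, by rw [hψw]; exact hcase.2⟩
        rw [hT, Finset.card_insert_of_notMem (by simpa using hne), Finset.card_singleton]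
        exact even_two
      · have hT : ((Finset.univ.filter (fun u => G.Adj x u ∧ ψ u = c)).filter
            (fun u => u = u₀ ∨ u = w₀)) = ∅ := by
          ext u
          simp only [Finset.mem_filter, Finset.mem_univ, true_and, Finset.notMem_empty,
            iff_false]
          rintro ⟨⟨ha, hc⟩, (rfl | rfl)⟩
          · exact hcase ⟨ha, by rw [hψu] at hc; exact hc⟩
          · have hx3 := (hadjw x).1 ha.symm
            have hxu : G.Adj x u₀ := ((hadj x).2 hx3).symm
            exact hcase ⟨hxu, by rw [hψw] at hc; exact hc⟩
        rw [hT]; simp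
    have e1 : colorCount G ψ x c
        = #(Finset.univ.filter (fun u => G.Adj x u ∧ ψ u = c)) := by
      unfold colorCount; congr!
    have e2 : colorCount (GraphDel G {u₀, w₀}) φ x c
        = #(Finset.univ.filter (fun u => (GraphDel G {u₀, w₀}).Adj x u ∧ φ u = c)) := by
      unfold colorCount; congr!
    rw [e1, e2, ← hsplit, h2]
    obtain ⟨k, hk⟩ := hTeven
    omega
  refine ⟨ψ, ?_, ?_⟩
  · -- proper
    intro a b hab
    by_cases haS : a = u₀ ∨ a = w₀
    · by_cases hbS : b = u₀ ∨ b = w₀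
      · exfalso
        rcases haS with rfl | rfl <;> rcases hbS with rfl | rfl
        · exact G.loopless.irrefl _ hab
        · exact hnuw hab
        · exact hnuw hab.symm
        · exact G.loopless.irrefl _ hab
      · push_neg at hbS
        rw [hψo b hbS.1 hbS.2]
        have hb3 : b = v₁ ∨ b = v₂ ∨ b = v₃ := by
          rcases haS with rfl | rfl
          · exact (hadj b).1 hab
          · exact (hadjw b).1 hab
        have hψa : ψ a = c₀ := by rcases haS with rfl | rfl <;> simp [hψu, hψw]
        rw [hψa]
        rcases hb3 with rfl | rfl | rfl
        · exact hc₀.1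
        · exact hc₀.2.1
        · exact hc₀.2.2
    · push_neg at haS
      rw [hψo a haS.1 haS.2]
      by_cases hbS : b = u₀ ∨ b = w₀
      · have ha3 : a = v₁ ∨ a = v₂ ∨ a = v₃ := by
          rcases hbS with rfl | rfl
          · exact (hadj a).1 hab.symm
          · exact (hadjw a).1 hab.symm
        have hψb : ψ b = c₀ := by rcases hbS with rfl | rfl <;> simp [hψu, hψw]
        rw [hψb]
        rcases ha3 with rfl | rfl | rfl
        · exact hc₀.1.symm ∘ Eq.symm ∘ Eq.symm
        · exact fun hh => hc₀.2.1 hh.symm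
        · exact fun hh => hc₀.2.2 hh.symm
      · push_neg at hbS
        rw [hψo b hbS.1 hbS.2]
        exact hφp a b (by rw [graphDel_adj, hSmem, hSmem]; tauto)
  · -- odd condition
    intro x ⟨y, hxy⟩
    by_cases hxu : x = u₀
    · rw [hxu]
      refine ⟨φ v₁, ?_⟩
      have hfil : Finset.univ.filter (fun u => G.Adj u₀ u ∧ ψ u = φ v₁) = {v₁} := by
        ext u
        simp only [Finset.mem_filter, Finset.mem_univ, true_and, Finset.mem_singleton]
        constructor
        · rintro ⟨ha, hc⟩
          rcases (hadj u).1 ha with h' | h' | h'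
          · exact h'
          · rw [h', hψo v₂ hv2.1 hv2.2] at hc; exact absurd hc.symm h12
          · rw [h', hψo v₃ hv3.1 hv3.2] at hc; exact absurd hc.symm h13
        · intro h'
          rw [h']
          exact ⟨(hadj v₁).2 (Or.inl rfl), hψo v₁ hv1.1 hv1.2⟩
      have e : colorCount G ψ u₀ (φ v₁)
          = #(Finset.univ.filter (fun u => G.Adj u₀ u ∧ ψ u = φ v₁)) := by
        unfold colorCount; congr!
      rw [e, hfil]
      simp
    · by_cases hxw : x = w₀
      · rw [hxw]
        refine ⟨φ v₁, ?_⟩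
        have hfil : Finset.univ.filter (fun u => G.Adj w₀ u ∧ ψ u = φ v₁) = {v₁} := by
          ext u
          simp only [Finset.mem_filter, Finset.mem_univ, true_and, Finset.mem_singleton]
          constructor
          · rintro ⟨ha, hc⟩
            rcases (hadjw u).1 ha with h' | h' | h'
            · exact h'
            · rw [h', hψo v₂ hv2.1 hv2.2] at hc; exact absurd hc.symm h12
            · rw [h', hψo v₃ hv3.1 hv3.2] at hc; exact absurd hc.symm h13
          · intro h'
            rw [h']
            exact ⟨(hadjw v₁).2 (Or.inl rfl), hψo v₁ hv1.1 hv1.2⟩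
        have e : colorCount G ψ w₀ (φ v₁)
            = #(Finset.univ.filter (fun u => G.Adj w₀ u ∧ ψ u = φ v₁)) := by
          unfold colorCount; congr!
        rw [e, hfil]
        simp
      · -- x survives: find a neighbor in the deleted graph
        have hz : ∃ z, (GraphDel G {u₀, w₀}).Adj x z := by
          by_cases hyS : y = u₀ ∨ y = w₀
          · have hx3 : x = v₁ ∨ x = v₂ ∨ x = v₃ := by
              rcases hyS with rfl | rfl
              · exact (hadj x).1 hxy.symm
              · exact (hadjw x).1 hxy.symm
            rcases hx3 with rfl | rfl | rfl
            · exact ⟨v₂, hG'12⟩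
            · exact ⟨v₁, hG'12.symm⟩
            · exact ⟨v₁, hG'13.symm⟩
          · push_neg at hyS
            exact ⟨y, by rw [graphDel_adj, hSmem, hSmem]; push_neg; exact ⟨hxy, ⟨hxu, hxw⟩, hyS⟩⟩
        obtain ⟨c, hc⟩ := hφodd x hz
        refine ⟨c, ?_⟩
        rw [Nat.odd_iff, key x hxu hxw c, ← Nat.odd_iff]
        exact hc
end
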